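/- arXiv:2503.10268 — 6 statements merged into one kernel-verified Lean document; each statement's English description precedes it below -/
import Mathlib

section
/- Let k ≥ 4 and n ≥ k + 1 be integers, let G be a W_k-saturated graph on n vertices, and let u be a vertex of G with degree n − 1. Then the induced subgraph G − u (obtained by deleting u) is C_k-saturated. -/
open SimpleGraph

/-- `G` contains a copy of `F`, i.e. a subgraph isomorphic to `F`. -/
def HasCopy {V W : Type*} (F : SimpleGraph V) (G : SimpleGraph W) : Prop :=
  ∃ f : F →g G, Function.Injective f

/-- `G` is `F`-free: `G` contains no subgraph isomorphic to `F`. -/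
def IsFree {V W : Type*} (F : SimpleGraph V) (G : SimpleGraph W) : Prop :=
  ¬ HasCopy F G

/-- `G` is `F`-semi-saturated: for every pair of non-adjacent vertices `u ≠ v`,
the graph `G + uv` contains a copy of `F` using the edge `uv`. -/
def IsSemiSat {V W : Type*} (F : SimpleGraph V) (G : SimpleGraph W) : Prop :=
  ∀ u v : W, u ≠ v → ¬ G.Adj u v →
    ∃ f : F →g (G ⊔ fromEdgeSet {s(u, v)}), Function.Injective f ∧
      ∃ a b : V, F.Adj a b ∧ f a = u ∧ f b = v

/-- `G` is `F`-saturated: `F`-free and `F`-semi-saturated. -/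
def IsSat {V W : Type*} (F : SimpleGraph V) (G : SimpleGraph W) : Prop :=
  IsFree F G ∧ IsSemiSat F G

/-- The join `G ∨ H` of two graphs. -/
def graphJoin {V W : Type*} (G : SimpleGraph V) (H : SimpleGraph W) :
    SimpleGraph (V ⊕ W) where
  Adj x y :=
    match x, y with
    | Sum.inl a, Sum.inl b => G.Adj a b
    | Sum.inr a, Sum.inr b => H.Adj a b
    | Sum.inl _, Sum.inr _ => True
    | Sum.inr _, Sum.inl _ => True
  symm := ⟨by rintro (a | a) (b | b) h <;> first | exact G.adj_symm h | exact H.adj_symm h | trivial⟩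
  loopless := ⟨by rintro (a | a) h <;> first | exact G.irrefl h | exact H.irrefl h⟩

/-- The wheel `W_k = K_1 ∨ C_k`. -/
def wheel (k : ℕ) : SimpleGraph (Unit ⊕ Fin k) :=
  graphJoin (⊥ : SimpleGraph Unit) (cycleGraph k)

/-- `sat(n, F)`: the minimum number of edges in an `F`-saturated graph on `n` vertices. -/
noncomputable def satNumber {V : Type*} (F : SimpleGraph V) (n : ℕ) : ℕ :=
  sInf { m | ∃ G : SimpleGraph (Fin n), IsSat F G ∧ G.edgeSet.ncard = m }

/-- `ssat(n, F)`: the minimum number of edges in an `F`-semi-saturated graph on `n` vertices. -/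
noncomputable def ssatNumber {V : Type*} (F : SimpleGraph V) (n : ℕ) : ℕ :=
  sInf { m | ∃ G : SimpleGraph (Fin n), IsSemiSat F G ∧ G.edgeSet.ncard = m }

section SatHelpers

variable {n k : ℕ}

private lemma sup_from_adj {G : SimpleGraph (Fin n)} {p q x y : Fin n}
    (h : (G ⊔ fromEdgeSet {s(p, q)}).Adj x y) :
    G.Adj x y ∨ (x = p ∧ y = q) ∨ (x = q ∧ y = p) := by
  rw [sup_adj, fromEdgeSet_adj, Set.mem_singleton_iff, Sym2.eq_iff] at h
  tauto

private lemma update_inj {α : Type*} {rim : Fin k → α} (hrinj : Function.Injective rim)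
    {c : α} (hc : ∀ t, c ≠ rim t) (i : Fin k) :
    Function.Injective (fun t => if t = i then c else rim t) := by
  intro s t h
  change (if s = i then c else rim s) = (if t = i then c else rim t) at h
  by_cases hs : s = i <;> by_cases ht : t = i
  · rw [hs, ht]
  · rw [if_pos hs, if_neg ht] at h; exact absurd h (hc t)
  · rw [if_neg hs, if_pos ht] at h; exact absurd h.symm (hc s)
  · rw [if_neg hs, if_neg ht] at h; exact hrinj h

private lemma wheelOf (G : SimpleGraph (Fin n)) (u : Fin n)
    (hu : ∀ x, x ≠ u → G.Adj u x)
    (r : Fin k → Fin n) (hru : ∀ t, r t ≠ u) (hrinj : Function.Injective r)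
    (hradj : ∀ s t, (cycleGraph k).Adj s t → G.Adj (r s) (r t)) :
    HasCopy (wheel k) G := by
  refine ⟨⟨Sum.elim (fun _ => u) r, ?_⟩, ?_⟩
  · rintro (x | x) (y | y) h
    · exact h.elim
    · exact hu _ (hru y)
    · exact (hu _ (hru x)).symm
    · exact hradj x y h
  · rintro (x | x) (y | y) h
    · exact congrArg Sum.inl (Subsingleton.elim x y)
    · exact absurd (h.symm : r y = u) (hru y)
    · exact absurd (h : r x = u) (hru x)
    · exact congrArg Sum.inr (hrinj h)

private lemma builder (G : SimpleGraph (Fin n)) (u : Fin n)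
    (v w : ({u}ᶜ : Set (Fin n)))
    (g : Fin k → Fin n) (hgu : ∀ t, g t ≠ u)
    (hadj : ∀ s t, (cycleGraph k).Adj s t →
      (G ⊔ fromEdgeSet {s((v : Fin n), (w : Fin n))}).Adj (g s) (g t))
    (hinj : Function.Injective g)
    (a b : Fin k) (hab : (cycleGraph k).Adj a b) (hga : g a = v) (hgb : g b = w) :
    ∃ g' : cycleGraph k →g (G.induce ({u}ᶜ : Set (Fin n)) ⊔ fromEdgeSet {s(v, w)}),
      Function.Injective g' ∧ ∃ a b, (cycleGraph k).Adj a b ∧ g' a = v ∧ g' b = w := by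
  refine ⟨⟨fun t => ⟨g t, by simp [hgu t]⟩, ?_⟩, ?_, a, b, hab, Subtype.ext hga, Subtype.ext hgb⟩
  · intro s t hst
    have hne : g s ≠ g t := (hadj s t hst).ne
    rw [sup_adj]
    rcases sup_from_adj (hadj s t hst) with h | ⟨h1, h2⟩ | ⟨h1, h2⟩
    · exact Or.inl h
    · refine Or.inr ?_
      rw [fromEdgeSet_adj]
      refine ⟨?_, fun e => hne (congrArg Subtype.val e)⟩
      rw [Set.mem_singleton_iff, Sym2.eq_iff]
      exact Or.inl ⟨Subtype.ext h1, Subtype.ext h2⟩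
    · refine Or.inr ?_
      rw [fromEdgeSet_adj]
      refine ⟨?_, fun e => hne (congrArg Subtype.val e)⟩
      rw [Set.mem_singleton_iff, Sym2.eq_iff]
      exact Or.inr ⟨Subtype.ext h1, Subtype.ext h2⟩
  · intro s t h
    exact hinj (congrArg Subtype.val h)

private lemma caseA (G : SimpleGraph (Fin n)) (u : Fin n)
    (v w : ({u}ᶜ : Set (Fin n)))
    (hub : Fin n) (rim : Fin k → Fin n)
    (rim_inj : Function.Injective rim)
    (hub_ne_rim : ∀ t, hub ≠ rim t)
    (hub_adj : ∀ t, (G ⊔ fromEdgeSet {s((v : Fin n), (w : Fin n))}).Adj hub (rim t))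
    (rim_adj : ∀ s t, (cycleGraph k).Adj s t →
      (G ⊔ fromEdgeSet {s((v : Fin n), (w : Fin n))}).Adj (rim s) (rim t))
    (a' b' : Fin k) (hab : (cycleGraph k).Adj a' b')
    (ha : rim a' = v) (hb : rim b' = w) :
    ∃ g' : cycleGraph k →g (G.induce ({u}ᶜ : Set (Fin n)) ⊔ fromEdgeSet {s(v, w)}),
      Function.Injective g' ∧ ∃ a b, (cycleGraph k).Adj a b ∧ g' a = v ∧ g' b = w := by
  have hvne : (v : Fin n) ≠ u := fun h => v.2 (Set.mem_singleton_iff.mpr h)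
  have hwne : (w : Fin n) ≠ u := fun h => w.2 (Set.mem_singleton_iff.mpr h)
  by_cases hex : ∃ i, rim i = u
  · obtain ⟨i, hi⟩ := hex
    have hia : ¬ a' = i := fun h => hvne (by rw [← ha, h, hi])
    have hib : ¬ b' = i := fun h => hwne (by rw [← hb, h, hi])
    have hhu : hub ≠ u := fun h => hub_ne_rim i (h.trans hi.symm)
    refine builder G u v w (fun t => if t = i then hub else rim t) ?_ ?_
      (update_inj rim_inj hub_ne_rim i) a' b' hab ?_ ?_
    · intro t
      show (if t = i then _ else _) ≠ u
      by_cases ht : t = i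
      · rw [if_pos ht]; exact hhu
      · rw [if_neg ht]; exact fun h => ht (rim_inj (h.trans hi.symm))
    · intro s t hst
      show (G ⊔ _).Adj (if s = i then hub else rim s) (if t = i then hub else rim t)
      by_cases hs : s = i <;> by_cases ht : t = i
      · exact absurd (hs.trans ht.symm) hst.ne
      · rw [if_pos hs, if_neg ht]; exact hub_adj t
      · rw [if_neg hs, if_pos ht]; exact (hub_adj s).symm
      · rw [if_neg hs, if_neg ht]; exact rim_adj s t hst
    · show (if a' = i then hub else rim a') = (v : Fin n)
      rw [if_neg hia]; exact ha
    · show (if b' = i then hub else rim b') = (w : Fin n)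
      rw [if_neg hib]; exact hb
  · push_neg at hex
    exact builder G u v w rim hex rim_adj rim_inj a' b' hab ha hb

private lemma caseB (hk : 2 ≤ k) (G : SimpleGraph (Fin n)) (u : Fin n)
    (hu : ∀ x, x ≠ u → G.Adj u x) (hfree : IsFree (wheel k) G)
    (v w : ({u}ᶜ : Set (Fin n))) (hvw : (v : Fin n) ≠ (w : Fin n))
    (rim : Fin k → Fin n)
    (rim_inj : Function.Injective rim)
    (hub_ne_rim : ∀ t, (v : Fin n) ≠ rim t)
    (hub_adj : ∀ t, (G ⊔ fromEdgeSet {s((v : Fin n), (w : Fin n))}).Adj (v : Fin n) (rim t))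
    (rim_adj : ∀ s t, (cycleGraph k).Adj s t →
      (G ⊔ fromEdgeSet {s((v : Fin n), (w : Fin n))}).Adj (rim s) (rim t))
    (b' : Fin k) (hb : rim b' = w) :
    ∃ g' : cycleGraph k →g (G.induce ({u}ᶜ : Set (Fin n)) ⊔ fromEdgeSet {s(v, w)}),
      Function.Injective g' ∧ ∃ a b, (cycleGraph k).Adj a b ∧ g' a = v ∧ g' b = w := by
  haveI : NeZero k := ⟨by omega⟩
  have hvne : (v : Fin n) ≠ u := fun h => v.2 (Set.mem_singleton_iff.mpr h)
  have hwne : (w : Fin n) ≠ u := fun h => w.2 (Set.mem_singleton_iff.mpr h)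
  have key : ∀ i, (cycleGraph k).Adj i b' → (∀ t, t ≠ i → rim t ≠ u) →
      ∃ g' : cycleGraph k →g (G.induce ({u}ᶜ : Set (Fin n)) ⊔ fromEdgeSet {s(v, w)}),
        Function.Injective g' ∧ ∃ a b, (cycleGraph k).Adj a b ∧ g' a = v ∧ g' b = w := by
    intro i hiadj hrimu
    refine builder G u v w (fun t => if t = i then (v : Fin n) else rim t) ?_ ?_
      (update_inj rim_inj hub_ne_rim i) i b' hiadj ?_ ?_
    · intro t
      show (if t = i then _ else _) ≠ u
      by_cases ht : t = i
      · rw [if_pos ht]; exact hvne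
      · rw [if_neg ht]; exact hrimu t ht
    · intro s t hst
      show (G ⊔ _).Adj (if s = i then (v : Fin n) else rim s) (if t = i then (v : Fin n) else rim t)
      by_cases hs : s = i <;> by_cases ht : t = i
      · exact absurd (hs.trans ht.symm) hst.ne
      · rw [if_pos hs, if_neg ht]; exact hub_adj t
      · rw [if_neg hs, if_pos ht]; exact (hub_adj s).symm
      · rw [if_neg hs, if_neg ht]; exact rim_adj s t hst
    · show (if i = i then (v : Fin n) else rim i) = (v : Fin n)
      rw [if_pos rfl]
    · show (if b' = i then (v : Fin n) else rim b') = (w : Fin n)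
      rw [if_neg (fun h => hiadj.ne h.symm)]; exact hb
  by_cases hex : ∃ i, rim i = u
  · obtain ⟨i, hi⟩ := hex
    by_cases hic : (cycleGraph k).Adj i b'
    · exact key i hic (fun t ht h => ht (rim_inj (h.trans hi.symm)))
    · exfalso
      apply hfree
      have hGedge : ∀ t, t ≠ b' → G.Adj (v : Fin n) (rim t) := by
        intro t htb
        rcases sup_from_adj (hub_adj t) with h | ⟨h1, h2⟩ | ⟨h1, h2⟩
        · exact h
        · exact absurd (rim_inj (h2.trans hb.symm)) htb
        · exact absurd h1 hvw
      have hGrim : ∀ s t, (cycleGraph k).Adj s t → G.Adj (rim s) (rim t) := by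
        intro s t hst
        rcases sup_from_adj (rim_adj s t hst) with h | ⟨h1, h2⟩ | ⟨h1, h2⟩
        · exact h
        · exact absurd h1.symm (hub_ne_rim s)
        · exact absurd h2.symm (hub_ne_rim t)
      refine wheelOf G u hu (fun t => if t = i then (v : Fin n) else rim t) ?_
        (update_inj rim_inj hub_ne_rim i) ?_
      · intro t
        show (if t = i then _ else _) ≠ u
        by_cases ht : t = i
        · rw [if_pos ht]; exact hvne
        · rw [if_neg ht]; exact fun h => ht (rim_inj (h.trans hi.symm))
      · intro s t hst
        show G.Adj (if s = i then (v : Fin n) else rim s) (if t = i then (v : Fin n) else rim t)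
        by_cases hs : s = i <;> by_cases ht : t = i
        · exact absurd (hs.trans ht.symm) hst.ne
        · rw [if_pos hs, if_neg ht]
          exact hGedge t (fun h => hic (by rwa [hs, h] at hst))
        · rw [if_neg hs, if_pos ht]
          refine (hGedge s (fun h => hic ?_)).symm
          rw [h, ht] at hst
          exact hst.symm
        · rw [if_neg hs, if_neg ht]; exact hGrim s t hst
  · push_neg at hex
    refine key (b' + 1) ?_ (fun t _ => hex t)
    rw [cycleGraph_adj']
    left
    rw [add_sub_cancel_left, Fin.val_one']
    exact Nat.mod_eq_of_lt (by omega)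

end SatHelpers

/-- If `G` is `W_k`-saturated on `n ≥ k + 1` vertices, `k ≥ 4`, and `u` has degree
`n - 1`, then `G - u` is `C_k`-saturated. -/
theorem sat_delete_conical (k n : ℕ) (hk : 4 ≤ k) (hn : k + 1 ≤ n)
    (G : SimpleGraph (Fin n)) (hG : IsSat (wheel k) G)
    (u : Fin n) (hu : (G.neighborSet u).ncard = n - 1) :
    IsSat (cycleGraph k) (G.induce ({u}ᶜ : Set (Fin n))) := by
  obtain ⟨hfree, hsat⟩ := hG
  have hn1 : 1 ≤ n := by omega
  have hcard : ({u}ᶜ : Set (Fin n)).ncard = n - 1 := by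
    have h1 := Set.ncard_add_ncard_compl ({u} : Set (Fin n))
    rw [Set.ncard_singleton] at h1
    have h2 : Nat.card (Fin n) = n := by simp
    omega
  have hsub : G.neighborSet u ⊆ ({u}ᶜ : Set (Fin n)) := by
    intro x hx
    simp only [Set.mem_compl_iff, Set.mem_singleton_iff]
    rintro rfl
    exact G.irrefl hx
  have heq : G.neighborSet u = ({u}ᶜ : Set (Fin n)) :=
    Set.eq_of_subset_of_ncard_le hsub (by rw [hu, hcard]) (Set.toFinite _)
  have hu_adj : ∀ x, x ≠ u → G.Adj u x := by
    intro x hx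
    have hx' : x ∈ G.neighborSet u := by rw [heq]; simpa using hx
    exact hx'
  constructor
  · rintro ⟨g, ginj⟩
    apply hfree
    apply wheelOf G u hu_adj (fun t => ((g t : ({u}ᶜ : Set (Fin n))) : Fin n))
    · exact fun t h => (g t).2 (Set.mem_singleton_iff.mpr h)
    · intro s t h
      exact ginj (Subtype.ext h)
    · intro s t h
      exact g.map_adj h
  · intro v w hvw hnadj
    have hvw' : (v : Fin n) ≠ (w : Fin n) := fun h => hvw (Subtype.ext h)
    have hnadj' : ¬ G.Adj (v : Fin n) (w : Fin n) := hnadj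
    obtain ⟨f, finj, a, b, hab, ha, hb⟩ := hsat (v : Fin n) (w : Fin n) hvw' hnadj'
    have hub_adj : ∀ t, (G ⊔ fromEdgeSet {s((v : Fin n), (w : Fin n))}).Adj
        (f (Sum.inl ())) (f (Sum.inr t)) :=
      fun t => f.map_adj trivial
    have rim_adj : ∀ s t, (cycleGraph k).Adj s t →
        (G ⊔ fromEdgeSet {s((v : Fin n), (w : Fin n))}).Adj (f (Sum.inr s)) (f (Sum.inr t)) :=
      fun s t h => f.map_adj h
    have rim_inj : Function.Injective (fun t => f (Sum.inr t)) := by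
      intro s t h
      have := finj h
      exact Sum.inr.inj this
    have hub_ne_rim : ∀ t, f (Sum.inl ()) ≠ f (Sum.inr t) := by
      intro t h
      exact absurd (finj h) (by simp)
    rcases a with x | a' <;> rcases b with y | b'
    · exact hab.elim
    · -- hub ↦ v
      obtain ⟨⟩ := x
      exact caseB (by omega) G u hu_adj hfree v w hvw' (fun t => f (Sum.inr t)) rim_inj
        (fun t h => hub_ne_rim t (ha.trans h))
        (fun t => by have h2 := hub_adj t; rw [ha] at h2; exact h2) rim_adj b' hb
    · -- hub ↦ w : symmetric
      obtain ⟨⟩ := y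
      have e : s((w : Fin n), (v : Fin n)) = s((v : Fin n), (w : Fin n)) := Sym2.eq_swap
      obtain ⟨g', ginj, a₀, b₀, h₀, hga, hgb⟩ :=
        caseB (by omega) G u hu_adj hfree w v hvw'.symm (fun t => f (Sum.inr t)) rim_inj
          (fun t h => hub_ne_rim t (hb.trans h))
          (fun t => by rw [e]; have h2 := hub_adj t; rw [hb] at h2; exact h2)
          (fun s t h => by rw [e]; exact rim_adj s t h)
          a' ha
      rw [show s(v, w) = s(w, v) from Sym2.eq_swap]
      exact ⟨g', ginj, b₀, a₀, h₀.symm, hgb, hga⟩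
    · -- both on rim
      exact caseA G u v w (f (Sum.inl ())) (fun t => f (Sum.inr t)) rim_inj hub_ne_rim
        hub_adj rim_adj a' b' hab ha hb
end

section
/- Let k ≥ 4 and let G be a W_k-semi-saturated graph on at least k + 1 vertices. Then for every vertex u of G, every vertex of G is at distance at most 2 from u; equivalently, the union of the closed neighbourhoods N[v] over all v ∈ N[u] equals V(G). -/
open SimpleGraph

lemma wheel_common_nbr {k : ℕ} (hk : 2 ≤ k) {a b : Unit ⊕ Fin k}
    (hab : (wheel k).Adj a b) :
    ∃ c, (wheel k).Adj a c ∧ (wheel k).Adj b c ∧ c ≠ a ∧ c ≠ b := by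
  obtain ⟨m, rfl⟩ : ∃ m, k = m + 2 := ⟨k - 2, by omega⟩
  match a, b with
  | Sum.inl x, Sum.inl y => exact absurd hab (by simp [wheel, graphJoin])
  | Sum.inl x, Sum.inr i =>
    refine ⟨Sum.inr (i + 1), trivial, ?_, by simp, ?_⟩
    · show (cycleGraph (m + 2)).Adj i (i + 1)
      rw [cycleGraph_adj]; right; simp
    · simp only [ne_eq, Sum.inr.injEq]
      intro h
      have := congrArg (· - i) h
      simpa using this
  | Sum.inr i, Sum.inl y =>
    refine ⟨Sum.inr (i + 1), ?_, trivial, ?_, by simp⟩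
    · show (cycleGraph (m + 2)).Adj i (i + 1)
      rw [cycleGraph_adj]; right; simp
    · simp only [ne_eq, Sum.inr.injEq]
      intro h
      have := congrArg (· - i) h
      simpa using this
  | Sum.inr i, Sum.inr j =>
    exact ⟨Sum.inl (), trivial, trivial, by simp, by simp⟩

/-- If `G` is `W_k`-semi-saturated on `n ≥ k + 1` vertices with `k ≥ 4`, then for every
vertex `u`, the union of the closed neighbourhoods `N[v]` over `v ∈ N[u]` is `V(G)`. -/
theorem closed_nbhd_union (k n : ℕ) (hk : 4 ≤ k) (hn : k + 1 ≤ n)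
    (G : SimpleGraph (Fin n)) (hG : IsSemiSat (wheel k) G) (u : Fin n) :
    (⋃ v ∈ insert u (G.neighborSet u), insert v (G.neighborSet v)) = Set.univ := by
  rw [Set.eq_univ_iff_forall]
  intro w
  by_cases hw : w = u
  · subst hw
    exact Set.mem_biUnion (Set.mem_insert _ _) (Set.mem_insert _ _)
  by_cases hadj : G.Adj u w
  · exact Set.mem_biUnion (Set.mem_insert_of_mem _ hadj) (Set.mem_insert _ _)
  obtain ⟨f, hinj, a, b, hab, hfa, hfb⟩ := hG u w (Ne.symm hw) hadj
  obtain ⟨c, hac, hbc, hca, hcb⟩ := wheel_common_nbr (by omega) hab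
  have hcu : f c ≠ u := fun h => hca (hinj (h.trans hfa.symm))
  have hcw : f c ≠ w := fun h => hcb (hinj (h.trans hfb.symm))
  have h1 : G.Adj u (f c) := by
    have h := f.map_adj hac
    rw [hfa] at h
    rcases h with h | h
    · exact h
    · exfalso
      simp only [fromEdgeSet_adj, Set.mem_singleton_iff, Sym2.eq, Sym2.rel_iff',
        Prod.mk.injEq, Prod.swap_prod_mk] at h
      rcases h.1 with ⟨_, e⟩ | ⟨e1, e2⟩
      · exact hcw e
      · exact hw e1.symm
  have h2 : G.Adj (f c) w := by
    have h := f.map_adj hbc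
    rw [hfb] at h
    rcases h with h | h
    · exact h.symm
    · exfalso
      simp only [fromEdgeSet_adj, Set.mem_singleton_iff, Sym2.eq, Sym2.rel_iff',
        Prod.mk.injEq, Prod.swap_prod_mk] at h
      rcases h.1 with ⟨e1, _⟩ | ⟨_, e2⟩
      · exact hw e1
      · exact hcu e2
  exact Set.mem_biUnion (Set.mem_insert_of_mem _ h1) (Set.mem_insert_of_mem _ h2)
end

section
/- Let k ≥ 4 and let G be a W_k-semi-saturated graph on at least k + 1 vertices. If x and y are distinct vertices of G both of degree 2, then x and y are not adjacent in G. -/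
open SimpleGraph

/-- Every vertex of the wheel `W_k`, `k ≥ 4`, has three distinct neighbors. -/
lemma wheel_three_nbrs (k : ℕ) (hk : 4 ≤ k) (v : Unit ⊕ Fin k) :
    ∃ p q r : Unit ⊕ Fin k, p ≠ q ∧ p ≠ r ∧ q ≠ r ∧
      (wheel k).Adj v p ∧ (wheel k).Adj v q ∧ (wheel k).Adj v r := by
  obtain ⟨m, rfl⟩ : ∃ m, k = m + 4 := ⟨k - 4, by omega⟩
  have h2ne : (2 : Fin (m + 4)) ≠ 0 := by simp [Fin.ext_iff, Nat.mod_eq_of_lt (show 2 < m + 4 by omega)]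
  match v with
  | Sum.inl _ =>
    refine ⟨Sum.inr 0, Sum.inr 1, Sum.inr 2, ?_, ?_, ?_, trivial, trivial, trivial⟩ <;>
      simp [Fin.ext_iff, Nat.mod_eq_of_lt (show 2 < m + 4 by omega)]
  | Sum.inr i =>
    refine ⟨Sum.inl (), Sum.inr (i + 1), Sum.inr (i - 1), by simp, by simp, ?_, trivial, ?_, ?_⟩
    · simp only [ne_eq, Sum.inr.injEq]
      intro h
      apply h2ne
      have : i + 1 - (i - 1) = (0 : Fin (m + 4)) := by rw [h]; open Fin.CommRing in ring
      calc (2 : Fin (m + 4)) = i + 1 - (i - 1) := by open Fin.CommRing in ring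
        _ = 0 := this
    · show (cycleGraph (m + 4)).Adj i (i + 1)
      have : m + 4 = (m + 2) + 2 := by omega
      rw [cycleGraph_adj']
      right
      rw [add_sub_cancel_left]
      simp [Fin.val_one]
    · show (cycleGraph (m + 4)).Adj i (i - 1)
      rw [cycleGraph_adj']
      left
      rw [sub_sub_cancel]
      simp [Fin.val_one]

/-- If `G` is `W_k`-semi-saturated on `n ≥ k + 1` vertices with `k ≥ 4`, then two
distinct vertices of degree `2` are not adjacent. -/
theorem roots_not_adjacent (k n : ℕ) (hk : 4 ≤ k) (hn : k + 1 ≤ n)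
    (G : SimpleGraph (Fin n)) (hG : IsSemiSat (wheel k) G)
    (x y : Fin n) (hxy : x ≠ y)
    (hx : (G.neighborSet x).ncard = 2) (hy : (G.neighborSet y).ncard = 2) :
    ¬ G.Adj x y := by
  intro hadj
  classical
  set S : Set (Fin n) := insert x (G.neighborSet x) with hS
  have hScard : S.ncard ≤ 3 := by
    calc S.ncard ≤ (G.neighborSet x).ncard + 1 := Set.ncard_insert_le _ _
      _ = 3 := by rw [hx]
  obtain ⟨u, hu⟩ : ∃ u, u ∉ S := by
    by_contra h
    push_neg at h
    have hSuniv : S = Set.univ := Set.eq_univ_of_forall h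
    have h1 : (Set.univ : Set (Fin n)).ncard = n := by
      rw [Set.ncard_univ]; simp
    rw [hSuniv, h1] at hScard
    omega
  have hux : u ≠ x := fun h => hu (by rw [h]; exact Set.mem_insert _ _)
  have hnadj : ¬ G.Adj x u := fun h => hu (Set.mem_insert_of_mem _ h)
  have huy : u ≠ y := fun h => hu (Set.mem_insert_of_mem _ (by rw [h]; exact hadj))
  obtain ⟨f, hfinj, a, b, hab, hfa, hfb⟩ := hG x u (Ne.symm hux) hnadj
  have hNx : (G ⊔ fromEdgeSet {s(x, u)}).neighborSet x = insert u (G.neighborSet x) := by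
    ext w
    simp only [mem_neighborSet, sup_adj, fromEdgeSet_adj, Set.mem_singleton_iff,
      Sym2.eq_iff, Set.mem_insert_iff]
    have h1 := hux.symm
    have h2 := hux
    constructor
    · rintro (h | ⟨⟨-, rfl⟩ | ⟨rfl, -⟩, hne⟩)
      · exact Or.inr h
      · exact Or.inl rfl
      · exact absurd rfl h1
    · rintro (rfl | h)
      · exact Or.inr ⟨Or.inl ⟨trivial, rfl⟩, hux.symm⟩
      · exact Or.inl h
  have hNy : (G ⊔ fromEdgeSet {s(x, u)}).neighborSet y = G.neighborSet y := by
    ext w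
    simp only [mem_neighborSet, sup_adj, fromEdgeSet_adj, Set.mem_singleton_iff,
      Sym2.eq_iff]
    constructor
    · rintro (h | ⟨⟨rfl, -⟩ | ⟨rfl, -⟩, hne⟩)
      · exact h
      · exact absurd rfl hxy
      · exact absurd rfl huy
    · exact Or.inl
  have hunmem : u ∉ G.neighborSet x := hnadj
  have hNxcard : ((G ⊔ fromEdgeSet {s(x, u)}).neighborSet x).ncard = 3 := by
    rw [hNx, Set.ncard_insert_of_notMem hunmem (Set.toFinite _), hx]
  obtain ⟨p, q, r, hpq, hpr, hqr, hap, haq, har⟩ := wheel_three_nbrs k hk a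
  have hmem : ∀ {c : Unit ⊕ Fin k}, (wheel k).Adj a c →
      f c ∈ (G ⊔ fromEdgeSet {s(x, u)}).neighborSet x := by
    intro c hc
    have h := f.map_adj hc
    rw [hfa] at h
    exact h
  have hsub : ({f p, f q, f r} : Set (Fin n)) ⊆ (G ⊔ fromEdgeSet {s(x, u)}).neighborSet x := by
    rintro w (rfl | rfl | rfl)
    exacts [hmem hap, hmem haq, hmem har]
  have htriple : ∀ {p q r : Unit ⊕ Fin k}, p ≠ q → p ≠ r → q ≠ r →
      ({f p, f q, f r} : Set (Fin n)).ncard = 3 := by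
    intro p q r hpq hpr hqr
    have h1 : f p ∉ ({f q, f r} : Set (Fin n)) := by
      simp only [Set.mem_insert_iff, Set.mem_singleton_iff]
      push_neg
      exact ⟨hfinj.ne hpq, hfinj.ne hpr⟩
    have h2 : f q ∉ ({f r} : Set (Fin n)) := by
      simp only [Set.mem_singleton_iff]
      exact hfinj.ne hqr
    rw [Set.ncard_insert_of_notMem h1 (Set.toFinite _),
      Set.ncard_insert_of_notMem h2 (Set.toFinite _),
      Set.ncard_singleton]
  have heq : ({f p, f q, f r} : Set (Fin n)) = (G ⊔ fromEdgeSet {s(x, u)}).neighborSet x :=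
    Set.eq_of_subset_of_ncard_le hsub
      (by rw [hNxcard, htriple hpq hpr hqr]) (Set.toFinite _)
  have hy' : y ∈ ({f p, f q, f r} : Set (Fin n)) := by
    rw [heq, mem_neighborSet]
    exact Or.inl hadj
  obtain ⟨c, hac, hfc⟩ : ∃ c, (wheel k).Adj a c ∧ f c = y := by
    rcases hy' with h | h | h
    exacts [⟨p, hap, h.symm⟩, ⟨q, haq, h.symm⟩, ⟨r, har, h.symm⟩]
  obtain ⟨p', q', r', hpq', hpr', hqr', hcp, hcq, hcr⟩ := wheel_three_nbrs k hk c
  have hmem' : ∀ {d : Unit ⊕ Fin k}, (wheel k).Adj c d → f d ∈ G.neighborSet y := by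
    intro d hd
    have h := f.map_adj hd
    rw [hfc] at h
    rw [← hNy]
    exact h
  have hsub' : ({f p', f q', f r'} : Set (Fin n)) ⊆ G.neighborSet y := by
    rintro w (rfl | rfl | rfl)
    exacts [hmem' hcp, hmem' hcq, hmem' hcr]
  have hle := Set.ncard_le_ncard hsub' (Set.toFinite _)
  rw [htriple hpq' hpr' hqr', hy] at hle
  omega
end

section
/- Let k ≥ 4 and let H be a C_k-saturated graph on m ≥ k vertices. Then the join K_1 ∨ H, obtained by adding one new vertex adjacent to all vertices of H, is a W_k-saturated graph on m + 1 vertices with e(H) + m edges. -/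
open SimpleGraph

section Aux

open Sum

variable {k m : ℕ} {H : SimpleGraph (Fin m)}

lemma cycleGraph_add_adj {k : ℕ} [NeZero k] (i0 : Fin k) {j j' : Fin k}
    (h : (cycleGraph k).Adj j j') : (cycleGraph k).Adj (i0 + j) (i0 + j') := by
  rw [cycleGraph_adj'] at h ⊢
  have h1 : i0 + j - (i0 + j') = j - j' := by rw [add_sub_add_left_eq_sub]
  have h2 : i0 + j' - (i0 + j) = j' - j := by rw [add_sub_add_left_eq_sub]
  rw [h1, h2]; exact h

theorem join_free (hk : 4 ≤ k) (hm : k ≤ m) (hfree : IsFree (cycleGraph k) H) :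
    IsFree (wheel k) (graphJoin (⊥ : SimpleGraph Unit) H) := by
  rintro ⟨f, hf⟩
  haveI : NeZero k := ⟨by omega⟩
  apply hfree
  have hm0 : 0 < m := by omega
  set ext : (Unit ⊕ Fin m) → Fin m := Sum.elim (fun _ => ⟨0, hm0⟩) id with hext
  by_cases hcase : ∃ i0 : Fin k, f (inr i0) = inl ()
  · obtain ⟨i0, hi0⟩ := hcase
    -- hub maps to some inr h0
    have hhub : f (inl ()) = inr (ext (f (inl ()))) := by
      rcases hc : f (inl ()) with u | x
      · exact absurd (hf (hc.trans (by cases u; exact hi0.symm))) (by simp)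
      · rfl
    set h0 : Fin m := ext (f (inl ())) with hh0
    have hg : ∀ i : Fin k, i ≠ i0 → f (inr i) = inr (ext (f (inr i))) := by
      intro i hi
      rcases hc : f (inr i) with u | x
      · exact absurd (Sum.inr_injective (hf (hc.trans (by cases u; exact hi0.symm)))) hi
      · rfl
    set g : Fin k → Fin m := fun i => ext (f (inr i)) with hgdef
    have hne0 : ∀ j : Fin k, j ≠ 0 → i0 + j ≠ i0 := by
      intro j hj hcontra
      apply hj
      have : i0 + j = i0 + 0 := by rw [hcontra, add_zero]
      exact add_left_cancel this
    refine ⟨⟨fun j => if j = 0 then h0 else g (i0 + j), ?_⟩, ?_⟩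
    · intro j j' hadj
      have hjj' : j ≠ j' := hadj.ne
      by_cases h1 : j = 0 <;> by_cases h2 : j' = 0
      · exact absurd (h1.trans h2.symm) hjj'
      · simp only [if_pos h1, if_neg h2]
        have hw : (wheel k).Adj (inl ()) (inr (i0 + j')) := trivial
        have := f.map_rel hw
        rw [hhub, hg _ (hne0 j' h2)] at this
        exact this
      · simp only [if_neg h1, if_pos h2]
        have hw : (wheel k).Adj (inl ()) (inr (i0 + j)) := trivial
        have := f.map_rel hw
        rw [hhub, hg _ (hne0 j h1)] at this
        exact this.symm
      · simp only [if_neg h1, if_neg h2]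
        have hadj' := cycleGraph_add_adj i0 hadj
        have hw : (wheel k).Adj (inr (i0 + j)) (inr (i0 + j')) := hadj'
        have := f.map_rel hw
        rw [hg _ (hne0 j h1), hg _ (hne0 j' h2)] at this
        exact this
    · intro j j' hjj'
      have hjj2 : (if j = (0 : Fin k) then h0 else g (i0 + j)) =
          (if j' = (0 : Fin k) then h0 else g (i0 + j')) := hjj'
      clear hjj'
      rename' hjj2 => hjj'
      by_cases h1 : j = 0 <;> by_cases h2 : j' = 0
      · exact h1.trans h2.symm
      · exfalso
        rw [if_pos h1, if_neg h2] at hjj'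
        have : f (inl ()) = f (inr (i0 + j')) := by
          rw [hhub, hg _ (hne0 j' h2)]; exact congrArg Sum.inr hjj'
        exact absurd (hf this) (by simp)
      · exfalso
        rw [if_neg h1, if_pos h2] at hjj'
        have : f (inl ()) = f (inr (i0 + j)) := by
          rw [hhub, hg _ (hne0 j h1)]; exact congrArg Sum.inr hjj'.symm
        exact absurd (hf this) (by simp)
      · rw [if_neg h1, if_neg h2] at hjj'
        have : f (inr (i0 + j)) = f (inr (i0 + j')) := by
          rw [hg _ (hne0 j h1), hg _ (hne0 j' h2)]; exact congrArg Sum.inr hjj'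
        exact add_left_cancel (Sum.inr_injective (hf this))
  · push_neg at hcase
    have hg : ∀ i : Fin k, f (inr i) = inr (ext (f (inr i))) := by
      intro i
      rcases hc : f (inr i) with u | x
      · exact absurd (by cases u; exact hc) (hcase i)
      · rfl
    refine ⟨⟨fun i => ext (f (inr i)), ?_⟩, ?_⟩
    · intro i j hadj
      have hw : (wheel k).Adj (inr i) (inr j) := hadj
      have := f.map_rel hw
      rw [hg i, hg j] at this
      exact this
    · intro i j hij
      have hij2 : ext (f (inr i)) = ext (f (inr j)) := hij
      clear hij
      rename' hij2 => hij
      have : f (inr i) = f (inr j) := by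
        rw [hg i, hg j]; exact congrArg Sum.inr hij
      exact Sum.inr_injective (hf this)

theorem join_semisat (hsemi : IsSemiSat (cycleGraph k) H) :
    IsSemiSat (wheel k) (graphJoin (⊥ : SimpleGraph Unit) H) := by
  rintro (u | a) (v | b) hne hnadj
  · exact absurd (by cases u; cases v; rfl) hne
  · exact absurd trivial hnadj
  · exact absurd trivial hnadj
  · have hab : a ≠ b := fun h => hne (by rw [h])
    have hnadj' : ¬ H.Adj a b := hnadj
    obtain ⟨f, hfinj, a', b', hadj', ha', hb'⟩ := hsemi a b hab hnadj'
    refine ⟨⟨Sum.elim (fun _ => inl ()) (fun i => inr (f i)), ?_⟩, ?_, ?_⟩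
    · rintro (x | x) (y | y) hxy
      · exact hxy.elim
      · exact Or.inl trivial
      · exact Or.inl trivial
      · have := f.map_rel hxy
        rcases this with h | h
        · exact Or.inl h
        · rw [fromEdgeSet_adj] at h
          obtain ⟨hmem, hne'⟩ := h
          right
          rw [fromEdgeSet_adj]
          refine ⟨?_, fun hc => hne' (Sum.inr_injective hc)⟩
          simp only [Set.mem_singleton_iff] at hmem ⊢
          rw [Sym2.eq_iff] at hmem ⊢
          rcases hmem with ⟨h1, h2⟩ | ⟨h1, h2⟩
          · exact Or.inl ⟨by simp only [Sum.elim_inr]; rw [h1],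
              by simp only [Sum.elim_inr]; rw [h2]⟩
          · exact Or.inr ⟨by simp only [Sum.elim_inr]; rw [h1],
              by simp only [Sum.elim_inr]; rw [h2]⟩
    · rintro (x | x) (y | y) hxy
      · exact congrArg Sum.inl (Subsingleton.elim x y)
      · exact absurd (hxy : (Sum.inl () : Unit ⊕ Fin m) = Sum.inr (f y)) Sum.inl_ne_inr
      · exact absurd (hxy : (Sum.inr (f x) : Unit ⊕ Fin m) = Sum.inl ()) Sum.inr_ne_inl
      · exact congrArg Sum.inr (hfinj (Sum.inr_injective hxy))
    · exact ⟨inr a', inr b', hadj', congrArg Sum.inr ha', congrArg Sum.inr hb'⟩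

theorem join_edgeSet_eq (H : SimpleGraph (Fin m)) :
    (graphJoin (⊥ : SimpleGraph Unit) H).edgeSet =
      (Sym2.map inr '' H.edgeSet) ∪
      ((fun i : Fin m => s(inl (), inr i)) '' Set.univ) := by
  ext e
  induction e with
  | _ x y =>
    rw [mem_edgeSet]
    rcases x with u | a <;> rcases y with v | b
    · constructor
      · intro h; exact h.elim
      · rintro (⟨e', _, he'⟩ | ⟨i, _, hi⟩)
        · induction e' with
          | _ p q => simp [Sym2.map_pair_eq, Sym2.eq_iff] at he'
        · simp [Sym2.eq_iff] at hi
    · constructor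
      · intro _
        exact Or.inr ⟨b, Set.mem_univ b, by cases u; rfl⟩
      · intro _; trivial
    · constructor
      · intro _
        exact Or.inr ⟨a, Set.mem_univ a, by cases v; rw [Sym2.eq_swap]⟩
      · intro _; trivial
    · constructor
      · intro h
        exact Or.inl ⟨s(a, b), h, by rw [Sym2.map_pair_eq]⟩
      · rintro (⟨e', he, he'⟩ | ⟨i, _, hi⟩)
        · induction e' with
          | _ p q =>
            simp only [Sym2.map_pair_eq, Sym2.eq_iff] at he'
            rcases he' with ⟨h1, h2⟩ | ⟨h1, h2⟩
            · rw [Sum.inr_injective h1, Sum.inr_injective h2] at he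
              exact he
            · rw [Sum.inr_injective h1, Sum.inr_injective h2] at he
              exact (mem_edgeSet H).mp (Sym2.eq_swap ▸ he)
        · simp [Sym2.eq_iff] at hi

theorem join_edge_count (H : SimpleGraph (Fin m)) :
    (graphJoin (⊥ : SimpleGraph Unit) H).edgeSet.ncard = H.edgeSet.ncard + m := by
  rw [join_edgeSet_eq]
  have hinj1 : Function.Injective (Sym2.map (inr : Fin m → Unit ⊕ Fin m)) :=
    Sym2.map.injective Sum.inr_injective
  have hinj2 : Function.Injective (fun i : Fin m => (s(Sum.inl (), inr i) : Sym2 (Unit ⊕ Fin m))) := by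
    intro i j hij
    simp only [Sym2.eq_iff] at hij
    simp at hij
    exact hij
  have hdisj : Disjoint (Sym2.map (inr : Fin m → Unit ⊕ Fin m) '' H.edgeSet)
      ((fun i : Fin m => (s(Sum.inl (), inr i) : Sym2 (Unit ⊕ Fin m))) '' Set.univ) := by
    rw [Set.disjoint_left]
    rintro e ⟨e', _, he'⟩ ⟨i, _, hi⟩
    induction e' with
    | _ p q =>
      rw [← hi, Sym2.map_pair_eq, Sym2.eq_iff] at he'
      simp at he'
  rw [Set.ncard_union_eq hdisj (Set.toFinite _) (Set.toFinite _),
    Set.ncard_image_of_injective _ hinj1, Set.ncard_image_of_injective _ hinj2,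
    Set.ncard_univ]
  simp

end Aux

/-- If `H` is `C_k`-saturated on `m ≥ k` vertices with `k ≥ 4`, then `K_1 ∨ H` is a
`W_k`-saturated graph on `m + 1` vertices with `e(H) + m` edges. -/
theorem join_one_sat (k m : ℕ) (hk : 4 ≤ k) (hm : k ≤ m)
    (H : SimpleGraph (Fin m)) (hH : IsSat (cycleGraph k) H) :
    IsSat (wheel k) (graphJoin (⊥ : SimpleGraph Unit) H) ∧
      Fintype.card (Unit ⊕ Fin m) = m + 1 ∧
      (graphJoin (⊥ : SimpleGraph Unit) H).edgeSet.ncard = H.edgeSet.ncard + m := by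
  refine ⟨⟨join_free hk hm hH.1, join_semisat hH.2⟩, by simp [add_comm], join_edge_count H⟩
end

section
/- Let k ≥ 6 and n ≥ (k−1)² + 1 be integers, and let G be a W_k-semi-saturated graph on n vertices with maximum degree at most n − 2. Then for every set R ⊆ V(G) of vertices, the sum of the degrees of the vertices in R satisfies Σ_{v∈R} deg(v) ≥ 3|R| − min{|C_G|, n − |R|}. -/
open SimpleGraph

/-- The degree of a vertex. -/
noncomputable def degS {n : ℕ} (G : SimpleGraph (Fin n)) (u : Fin n) : ℕ :=
  (G.neighborSet u).ncard

/-- `A_G`: the vertices of degree at least `k - 1`. -/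
def setA {n : ℕ} (k : ℕ) (G : SimpleGraph (Fin n)) : Set (Fin n) :=
  {u | k - 1 ≤ degS G u}

/-- `B_G`: the vertices of degree between `3` and `k - 2`. -/
def setB {n : ℕ} (k : ℕ) (G : SimpleGraph (Fin n)) : Set (Fin n) :=
  {u | 3 ≤ degS G u ∧ degS G u ≤ k - 2}

/-- `C_G`: the vertices of degree `2`. -/
def setC {n : ℕ} (G : SimpleGraph (Fin n)) : Set (Fin n) :=
  {u | degS G u = 2}

/-- `A*_G = B_G ∪ C_G`. -/
def setAstar {n : ℕ} (k : ℕ) (G : SimpleGraph (Fin n)) : Set (Fin n) :=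
  setB k G ∪ setC G


-- ### auxiliary lemmas ###
section wheelfacts
variable {k : ℕ}

lemma wheel_adj_hub (i : Fin k) : (wheel k).Adj (Sum.inl ()) (Sum.inr i) := trivial

lemma wheel_adj_rim {i j : Fin k} : (wheel k).Adj (Sum.inr i) (Sum.inr j) ↔ (cycleGraph k).Adj i j := Iff.rfl

lemma wheel_adj_ll {a b : Unit} : ¬ (wheel k).Adj (Sum.inl a) (Sum.inl b) := fun h => h

lemma wheel_nbr_hub : (wheel k).neighborSet (Sum.inl ()) = Set.range Sum.inr := by
  ext z
  cases z with
  | inl a => simpa [neighborSet] using fun x h => (Sum.inl_ne_inr h.symm).elim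
  | inr i => simpa [neighborSet] using wheel_adj_hub i

lemma wheel_nbr_hub_ncard : ((wheel k).neighborSet (Sum.inl ())).ncard = k := by
  rw [wheel_nbr_hub]
  rw [Set.ncard_eq_toFinset_card', Set.toFinset_range]
  simp [Finset.card_image_of_injective _ Sum.inr_injective]

lemma wheel_nbr_rim (i : Fin k) :
    (wheel k).neighborSet (Sum.inr i) = {Sum.inl ()} ∪ Sum.inr '' ((cycleGraph k).neighborSet i) := by
  ext z
  cases z with
  | inl a =>
    simp only [mem_neighborSet, Set.mem_union, Set.mem_singleton_iff, Set.mem_image]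
    constructor
    · intro _; exact Or.inl trivial
    · intro _; exact ((wheel k).adj_symm (wheel_adj_hub i))
  | inr j =>
    simp only [mem_neighborSet, Set.mem_union, Set.mem_singleton_iff, Set.mem_image]
    constructor
    · intro h
      exact Or.inr ⟨j, (wheel_adj_rim.mp h : _), rfl⟩
    · rintro (h | ⟨j', hj', h⟩)
      · exact absurd h (Sum.inr_ne_inl)
      · cases Sum.inr_injective h
        exact wheel_adj_rim.mpr hj'
end wheelfacts


open Fin.CommRing in
lemma fin_cast_ne_zero {m c : ℕ} (h0 : 0 < c) (hc : c < m+6) : (c : Fin (m+6)) ≠ 0 := by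
  intro h
  rw [Fin.natCast_eq_zero] at h
  exact absurd (Nat.le_of_dvd h0 h) (by omega)

open Fin.CommRing in
lemma cycle_no_triangle {m : ℕ} {i j l : Fin (m+6)} (hij : (cycleGraph (m+6)).Adj i j)
    (hjl : (cycleGraph (m+6)).Adj j l) (hil : (cycleGraph (m+6)).Adj i l) : False := by
  have h1 : ((1:ℕ) : Fin (m+6)) ≠ 0 := fin_cast_ne_zero (by omega) (by omega)
  have h3 : ((3:ℕ) : Fin (m+6)) ≠ 0 := fin_cast_ne_zero (by omega) (by omega)
  have hil' : i ≠ l := hil.ne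
  rcases (cycleGraph_adj (n := m+4)).mp hij with ha | ha <;>
  rcases (cycleGraph_adj (n := m+4)).mp hjl with hb | hb <;>
  rcases (cycleGraph_adj (n := m+4)).mp hil with hc | hc
  · exact h1 (by push_cast; linear_combination hc - ha - hb)
  · exact h3 (by push_cast; linear_combination -ha - hb - hc)
  · exact hil' (by have : i - l = 0 := by linear_combination ha - hb
                   exact sub_eq_zero.mp this)
  · exact hil' (sub_eq_zero.mp (by linear_combination ha - hb))
  · exact hil' (sub_eq_zero.mp (by linear_combination hb - ha))
  · exact hil' (by have : i - l = 0 := by linear_combination hb - ha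
                   exact sub_eq_zero.mp this)
  · exact h3 (by push_cast; linear_combination -ha - hb - hc)
  · exact h1 (by push_cast; linear_combination hc - ha - hb)

open Fin.CommRing in
lemma cycle_nbr_ncard {m : ℕ} (i : Fin (m+6)) : ((cycleGraph (m+6)).neighborSet i).ncard = 2 := by
  have h2 : ((2:ℕ) : Fin (m+6)) ≠ 0 := fin_cast_ne_zero (by omega) (by omega)
  rw [show ((cycleGraph (m+6)).neighborSet i) = {i - 1, i + 1} from cycleGraph_neighborSet (n := m+4)]
  rw [Set.ncard_pair]
  intro h
  apply h2
  push_cast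
  linear_combination -h


section sup
variable {n : ℕ} {G : SimpleGraph (Fin n)} {u v x y : Fin n}

lemma sup_adj_iff (huv : u ≠ v) :
    (G ⊔ fromEdgeSet {s(u,v)}).Adj x y ↔ G.Adj x y ∨ (x = u ∧ y = v) ∨ (x = v ∧ y = u) := by
  constructor
  · rintro (h | h)
    · exact Or.inl h
    · rcases (fromEdgeSet_adj _).mp h with ⟨hm, _⟩
      exact Or.inr (Sym2.eq_iff.mp hm)
  · rintro (h | ⟨rfl, rfl⟩ | ⟨rfl, rfl⟩)
    · exact Or.inl h
    · exact Or.inr ((fromEdgeSet_adj _).mpr ⟨rfl, huv⟩)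
    · exact Or.inr ((fromEdgeSet_adj _).mpr ⟨Sym2.eq_swap, huv.symm⟩)

lemma adj_of_sup_adj (huv : u ≠ v) (hx : x ≠ u) (hx' : x ≠ v)
    (h : (G ⊔ fromEdgeSet {s(u,v)}).Adj x y) : G.Adj x y := by
  rcases (sup_adj_iff huv).mp h with h | ⟨h1, _⟩ | ⟨h1, _⟩
  · exact h
  · exact absurd h1 hx
  · exact absurd h1 hx'

lemma sup_nbr_of_ne (huv : u ≠ v) (hx : x ≠ u) (hx' : x ≠ v) :
    (G ⊔ fromEdgeSet {s(u,v)}).neighborSet x = G.neighborSet x := by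
  ext y
  simp only [mem_neighborSet]
  constructor
  · exact adj_of_sup_adj huv hx hx'
  · intro h; exact Or.inl h

lemma sup_nbr_left (huv : u ≠ v) :
    (G ⊔ fromEdgeSet {s(u,v)}).neighborSet u = insert v (G.neighborSet u) := by
  ext y
  simp only [mem_neighborSet, Set.mem_insert_iff]
  rw [sup_adj_iff huv]
  constructor
  · rintro (h | ⟨_, rfl⟩ | ⟨h1, _⟩)
    · exact Or.inr h
    · exact Or.inl rfl
    · exact absurd h1 huv
  · rintro (rfl | h)
    · exact Or.inr (Or.inl ⟨rfl, rfl⟩)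
    · exact Or.inl h

lemma degS_sup_of_ne (huv : u ≠ v) (hx : x ≠ u) (hx' : x ≠ v) :
    degS (G ⊔ fromEdgeSet {s(u,v)}) x = degS G x := by
  unfold degS; rw [sup_nbr_of_ne huv hx hx']

lemma degS_sup_left (huv : u ≠ v) (hnadj : ¬ G.Adj u v) :
    degS (G ⊔ fromEdgeSet {s(u,v)}) u = degS G u + 1 := by
  unfold degS
  rw [sup_nbr_left huv, Set.ncard_insert_of_notMem (by simpa using hnadj) (Set.toFinite _)]

lemma exists_nonadj (hn : 2 ≤ n) (hdx : degS G x ≤ n - 2) : ∃ w, w ≠ x ∧ ¬ G.Adj x w := by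
  by_contra hcon
  push_neg at hcon
  have hsub : Set.univ \ {x} ⊆ G.neighborSet x := by
    intro w hw
    exact hcon w (by simpa using hw.2)
  have h1 : (Set.univ \ {x} : Set (Fin n)).ncard = n - 1 := by
    rw [Set.ncard_diff_singleton_of_mem (Set.mem_univ x), Set.ncard_univ]
    simp
  have h2 := Set.ncard_le_ncard hsub (Set.toFinite _)
  rw [h1] at h2
  unfold degS at hdx
  have h3 := h2.trans hdx
  omega
end sup


section extract
variable {n m : ℕ} {G : SimpleGraph (Fin n)} {u v : Fin n}

lemma sup_edge_comm : (G ⊔ fromEdgeSet {s(u,v)}) = (G ⊔ fromEdgeSet {s(v,u)}) := by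
  rw [Sym2.eq_swap]

lemma sup_nbr_right (huv : u ≠ v) :
    (G ⊔ fromEdgeSet {s(u,v)}).neighborSet v = insert u (G.neighborSet v) := by
  rw [sup_edge_comm]
  exact sup_nbr_left huv.symm

lemma ncard_range_inr : (Set.range (Sum.inr : Fin m → Unit ⊕ Fin m)).ncard = m := by
  rw [← Set.image_univ, Set.ncard_image_of_injective _ Sum.inr_injective, Set.ncard_univ]
  simp

lemma wheel_nbr_rim_ncard (i : Fin (m+6)) :
    ((wheel (m+6)).neighborSet (Sum.inr i)).ncard = 3 := by
  rw [wheel_nbr_rim]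
  rw [Set.ncard_union_eq (by
    simp only [Set.disjoint_singleton_left, Set.mem_image]
    rintro ⟨j, _, hj⟩
    exact Sum.inr_ne_inl hj) (Set.toFinite _) (Set.toFinite _)]
  rw [Set.ncard_singleton, Set.ncard_image_of_injective _ Sum.inr_injective, cycle_nbr_ncard]

lemma wheel_deg_ge_3 (z : Unit ⊕ Fin (m+6)) : 3 ≤ ((wheel (m+6)).neighborSet z).ncard := by
  cases z with
  | inl a => cases a; rw [wheel_nbr_hub_ncard]; omega
  | inr i => rw [wheel_nbr_rim_ncard]

lemma hom_nbr_subset {V : Type*} {F : SimpleGraph V} {H : SimpleGraph (Fin n)} (f : F →g H)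
    (z : V) : f '' F.neighborSet z ⊆ H.neighborSet (f z) := by
  rintro y ⟨w, hw, rfl⟩
  exact f.map_adj hw

lemma hom_deg_le {V : Type*} {F : SimpleGraph V} {H : SimpleGraph (Fin n)} (f : F →g H)
    (hf : Function.Injective f) (z : V) : (F.neighborSet z).ncard ≤ degS H (f z) := by
  rw [← Set.ncard_image_of_injective (F.neighborSet z) hf]
  exact Set.ncard_le_ncard (hom_nbr_subset f z) (Set.toFinite _)

lemma image_deg3 {f : wheel (m+6) →g (G ⊔ fromEdgeSet {s(u,v)})} (hf : Function.Injective f)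
    (z : Unit ⊕ Fin (m+6)) : 3 ≤ degS (G ⊔ fromEdgeSet {s(u,v)}) (f z) :=
  le_trans (wheel_deg_ge_3 z) (hom_deg_le f hf z)

lemma degS_sup_le (huv : u ≠ v) (hnadj : ¬ G.Adj u v) (x : Fin n) :
    degS (G ⊔ fromEdgeSet {s(u,v)}) x ≤ degS G x + 1 := by
  by_cases hxu : x = u
  · subst hxu; rw [degS_sup_left huv hnadj]
  · by_cases hxv : x = v
    · subst hxv
      unfold degS
      rw [sup_nbr_right huv]
      calc (insert u (G.neighborSet x)).ncard ≤ (G.neighborSet x).ncard + 1 :=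
            Set.ncard_insert_le _ _
        _ = degS G x + 1 := rfl
    · rw [degS_sup_of_ne huv hxu hxv]
      omega

lemma hub_deg (huv : u ≠ v)
    {f : wheel (m+6) →g (G ⊔ fromEdgeSet {s(u,v)})} (hf : Function.Injective f)
    (hhu : f (Sum.inl ()) ≠ u) (hhv : f (Sum.inl ()) ≠ v) :
    m+6 ≤ degS G (f (Sum.inl ())) := by
  have h1 : f '' ((wheel (m+6)).neighborSet (Sum.inl ())) ⊆
      (G ⊔ fromEdgeSet {s(u,v)}).neighborSet (f (Sum.inl ())) := hom_nbr_subset f _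
  rw [sup_nbr_of_ne huv hhu hhv] at h1
  have h2 := Set.ncard_le_ncard h1 (Set.toFinite _)
  rw [Set.ncard_image_of_injective _ hf, wheel_nbr_hub_ncard] at h2
  exact h2

lemma hub_adj_G (huv : u ≠ v)
    {f : wheel (m+6) →g (G ⊔ fromEdgeSet {s(u,v)})}
    (hhu : f (Sum.inl ()) ≠ u) (hhv : f (Sum.inl ()) ≠ v) (i : Fin (m+6)) :
    G.Adj (f (Sum.inl ())) (f (Sum.inr i)) :=
  adj_of_sup_adj huv hhu hhv (f.map_adj (wheel_adj_hub i))

lemma nbr_eq_pair {p q : Fin n} (hu2 : degS G u = 2) (hup : G.Adj u p) (huq : G.Adj u q)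
    (hpq : p ≠ q) : G.neighborSet u = {p, q} := by
  have hsub : ({p, q} : Set (Fin n)) ⊆ G.neighborSet u := by
    rintro y (rfl | rfl)
    · exact hup
    · exact huq
  have hcard : (G.neighborSet u).ncard ≤ ({p, q} : Set (Fin n)).ncard := by
    rw [Set.ncard_pair hpq]
    exact le_of_eq hu2
  exact (Set.eq_of_subset_of_ncard_le hsub hcard (Set.toFinite _)).symm

lemma nbr_pair_of_deg2 (hu2 : degS G u = 2) :
    ∃ p q, p ≠ q ∧ G.Adj u p ∧ G.Adj u q ∧ G.neighborSet u = {p, q} := by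
  obtain ⟨p, q, hpq, hset⟩ := Set.ncard_eq_two.mp hu2
  refine ⟨p, q, hpq, ?_, ?_, hset⟩
  · have : p ∈ G.neighborSet u := by rw [hset]; exact Or.inl rfl
    exact this
  · have : q ∈ G.neighborSet u := by rw [hset]; exact Or.inr rfl
    exact this

lemma rim_exact_gen (huv : u ≠ v) (hnadj : ¬ G.Adj u v)
    {f : wheel (m+6) →g (G ⊔ fromEdgeSet {s(u,v)})} (hf : Function.Injective f)
    {c : Unit ⊕ Fin (m+6)} {x y : Fin n} (hfc : f c = x)
    (hN : (G ⊔ fromEdgeSet {s(u,v)}).neighborSet x = insert y (G.neighborSet x))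
    (hynotin : y ∉ G.neighborSet x) (hx2 : degS G x = 2) :
    ∃ i : Fin (m+6), c = Sum.inr i ∧
      f '' ((wheel (m+6)).neighborSet (Sum.inr i)) = insert y (G.neighborSet x) := by
  have hdeg' : degS (G ⊔ fromEdgeSet {s(u,v)}) x = 3 := by
    unfold degS
    rw [hN, Set.ncard_insert_of_notMem hynotin (Set.toFinite _)]
    rw [show (G.neighborSet x).ncard = 2 from hx2]
  obtain ⟨i, rfl⟩ : ∃ i, c = Sum.inr i := by
    cases c with
    | inl a =>
      exfalso
      have h1 := hom_deg_le f hf (Sum.inl a)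
      cases a
      rw [wheel_nbr_hub_ncard, hfc, hdeg'] at h1
      omega
    | inr i => exact ⟨i, rfl⟩
  refine ⟨i, rfl, ?_⟩
  have hsub : f '' ((wheel (m+6)).neighborSet (Sum.inr i)) ⊆
      (G ⊔ fromEdgeSet {s(u,v)}).neighborSet x := hfc ▸ hom_nbr_subset f _
  rw [hN] at hsub
  apply Set.eq_of_subset_of_ncard_le hsub _ (Set.toFinite _)
  rw [Set.ncard_image_of_injective _ hf, wheel_nbr_rim_ncard]
  rw [Set.ncard_insert_of_notMem hynotin (Set.toFinite _)]
  rw [show (G.neighborSet x).ncard = 2 from hx2]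

lemma rim_exact_fst (huv : u ≠ v) (hnadj : ¬ G.Adj u v)
    {f : wheel (m+6) →g (G ⊔ fromEdgeSet {s(u,v)})} (hf : Function.Injective f)
    {c : Unit ⊕ Fin (m+6)} (hfc : f c = u) (hu2 : degS G u = 2) :
    ∃ i : Fin (m+6), c = Sum.inr i ∧
      f '' ((wheel (m+6)).neighborSet (Sum.inr i)) = insert v (G.neighborSet u) :=
  rim_exact_gen huv hnadj hf hfc (sup_nbr_left huv) (by simpa using hnadj) hu2

lemma rim_exact_snd (huv : u ≠ v) (hnadj : ¬ G.Adj u v)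
    {f : wheel (m+6) →g (G ⊔ fromEdgeSet {s(u,v)})} (hf : Function.Injective f)
    {c : Unit ⊕ Fin (m+6)} (hfc : f c = v) (hv2 : degS G v = 2) :
    ∃ i : Fin (m+6), c = Sum.inr i ∧
      f '' ((wheel (m+6)).neighborSet (Sum.inr i)) = insert u (G.neighborSet v) :=
  rim_exact_gen huv hnadj hf hfc (sup_nbr_right huv)
    (by simpa using fun h => hnadj h.symm) hv2

lemma mem_wheel_nbr_rim {i : Fin (m+6)} {z : Unit ⊕ Fin (m+6)} :
    z ∈ (wheel (m+6)).neighborSet (Sum.inr i) ↔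
      z = Sum.inl () ∨ ∃ j, (cycleGraph (m+6)).Adj i j ∧ z = Sum.inr j := by
  rw [wheel_nbr_rim]
  simp only [Set.mem_union, Set.mem_singleton_iff, Set.mem_image, mem_neighborSet]
  constructor
  · rintro (h | ⟨j, hj, rfl⟩)
    · exact Or.inl h
    · exact Or.inr ⟨j, hj, rfl⟩
  · rintro (h | ⟨j, hj, rfl⟩)
    · exact Or.inl h
    · exact Or.inr ⟨j, hj, rfl⟩

end extract


section structural
variable {n m : ℕ} {G : SimpleGraph (Fin n)}

lemma min_deg2 (hG : IsSemiSat (wheel (m+6)) G) (hn : 2 ≤ n)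
    (hdeg : ∀ x : Fin n, degS G x ≤ n - 2) (x : Fin n) : 2 ≤ degS G x := by
  obtain ⟨w, hwx, hnadj⟩ := exists_nonadj hn (hdeg x)
  obtain ⟨f, hf, a, b, hab, hfa, hfb⟩ := hG x w hwx.symm hnadj
  have h3 := image_deg3 hf a
  rw [hfa] at h3
  have h4 := degS_sup_le hwx.symm hnadj x
  omega

lemma nbr_deg3 (hG : IsSemiSat (wheel (m+6)) G) (hn : 2 ≤ n)
    (hdeg : ∀ x : Fin n, degS G x ≤ n - 2) {u x : Fin n}
    (hu2 : degS G u = 2) (hux : G.Adj u x) : 3 ≤ degS G x := by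
  obtain ⟨w, hwu, hnadj⟩ := exists_nonadj hn (hdeg u)
  have hxw : x ≠ w := by rintro rfl; exact hnadj hux
  have hxu : x ≠ u := hux.ne'
  obtain ⟨f, hf, a, b, hab, hfa, hfb⟩ := hG u w hwu.symm hnadj
  obtain ⟨i, rfl, himg⟩ := rim_exact_fst hwu.symm hnadj hf hfa hu2
  have hxmem : x ∈ insert w (G.neighborSet u) := Set.mem_insert_of_mem _ hux
  rw [← himg] at hxmem
  obtain ⟨z, hz, hfz⟩ := hxmem
  have h3 := image_deg3 hf z
  rw [hfz] at h3
  rwa [degS_sup_of_ne hwu.symm hxu hxw] at h3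

lemma C_nonadj (hG : IsSemiSat (wheel (m+6)) G) (hn : 2 ≤ n)
    (hdeg : ∀ x : Fin n, degS G x ≤ n - 2) {u u' : Fin n}
    (hu2 : degS G u = 2) (hu'2 : degS G u' = 2) : ¬ G.Adj u u' := by
  intro h
  have := nbr_deg3 hG hn hdeg hu2 h
  omega

lemma star_lemma (hG : IsSemiSat (wheel (m+6)) G) {u w : Fin n}
    (hu : degS G u + 2 ≤ m+6) (hw : degS G w + 2 ≤ m+6) (hne : u ≠ w)
    (hnadj : ¬ G.Adj u w) :
    ∃ h, m+6 ≤ degS G h ∧ G.Adj u h ∧ G.Adj w h := by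
  obtain ⟨f, hf, a, b, hab, hfa, hfb⟩ := hG u w hne hnadj
  have hrim : ∀ (c : Unit ⊕ Fin (m+6)) (x : Fin n), f c = x → degS G x + 2 ≤ m+6 →
      ∃ i, c = Sum.inr i := by
    intro c x hfc hx
    cases c with
    | inl a0 =>
      exfalso
      have h1 := hom_deg_le f hf (Sum.inl a0)
      cases a0
      rw [wheel_nbr_hub_ncard, hfc] at h1
      have h2 := degS_sup_le hne hnadj x
      omega
    | inr i => exact ⟨i, rfl⟩
  obtain ⟨i, rfl⟩ := hrim a u hfa hu
  obtain ⟨j, rfl⟩ := hrim b w hfb hw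
  have hhu : f (Sum.inl ()) ≠ u := fun h => Sum.inl_ne_inr (hf (h.trans hfa.symm))
  have hhv : f (Sum.inl ()) ≠ w := fun h => Sum.inl_ne_inr (hf (h.trans hfb.symm))
  refine ⟨f (Sum.inl ()), hub_deg hne hf hhu hhv, ?_, ?_⟩
  · have := hub_adj_G hne (f := f) hhu hhv i
    rw [hfa] at this; exact this.symm
  · have := hub_adj_G hne (f := f) hhu hhv j
    rw [hfb] at this; exact this.symm

lemma pair_distinct (hG : IsSemiSat (wheel (m+6)) G) {u u' : Fin n}
    (hu2 : degS G u = 2) (hu'2 : degS G u' = 2) (hnadj : ¬ G.Adj u u')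
    (hNN : G.neighborSet u = G.neighborSet u') : u = u' := by
  by_contra hne
  obtain ⟨f, hf, a, b, hab, hfa, hfb⟩ := hG u u' hne hnadj
  obtain ⟨i, rfl, himgu⟩ := rim_exact_fst hne hnadj hf hfa hu2
  obtain ⟨j, rfl, himgv⟩ := rim_exact_snd hne hnadj hf hfb hu'2
  obtain ⟨p, q, hpq, hup, huq, hset⟩ := nbr_pair_of_deg2 hu2
  -- hub
  set h := f (Sum.inl ()) with hh
  have hhmem : h ∈ insert u' (G.neighborSet u) := by
    rw [← himgu]
    exact ⟨Sum.inl (), mem_wheel_nbr_rim.mpr (Or.inl rfl), rfl⟩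
  have hhne : h ≠ u' := fun hcon => Sum.inl_ne_inr (hf (hcon.trans hfb.symm))
  have hhne2 : h ≠ u := fun hcon => Sum.inl_ne_inr (hf (hcon.trans hfa.symm))
  have hhmem' : h ∈ G.neighborSet u := by
    rcases hhmem with hcon | hmem
    · exact absurd hcon hhne
    · exact hmem
  -- key: for the "other" neighbour s
  have key : ∀ p q : Fin n, p ≠ q → G.neighborSet u = {p, q} → h = p → False := by
    intro p q hpq hset hhp
    -- s := q
    have hqmem : q ∈ G.neighborSet u := by rw [hset]; exact Or.inr rfl
    have hqmemu : q ∈ insert u' (G.neighborSet u) := Set.mem_insert_of_mem _ hqmem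
    rw [← himgu] at hqmemu
    obtain ⟨z, hz, hfz⟩ := hqmemu
    rcases mem_wheel_nbr_rim.mp hz with rfl | ⟨l, hl, rfl⟩
    · exact hpq (hhp ▸ hfz.symm ▸ rfl)
    have hqmem' : q ∈ G.neighborSet u' := by rw [← hNN, hset]; exact Or.inr rfl
    have hqmemv : q ∈ insert u (G.neighborSet u') := Set.mem_insert_of_mem _ hqmem'
    rw [← himgv] at hqmemv
    obtain ⟨z', hz', hfz'⟩ := hqmemv
    rcases mem_wheel_nbr_rim.mp hz' with rfl | ⟨l', hl', rfl⟩
    · exact hpq (hhp ▸ hfz'.symm ▸ rfl)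
    have hll : l = l' := by
      have := hf (hfz.trans hfz'.symm)
      exact Sum.inr_injective this
    subst hll
    -- triangle i j l
    have hij : (cycleGraph (m+6)).Adj i j := hab
    exact cycle_no_triangle hij hl' hl
  rcases (by rw [hset] at hhmem'; exact hhmem' : h = p ∨ h = q) with hhp | hhq
  · exact key p q hpq hset hhp
  · exact key q p hpq.symm (by rw [hset, Set.pair_comm]) hhq

lemma diamond (hG : IsSemiSat (wheel (m+6)) G) {u a x q : Fin n}
    (hu2 : degS G u = 2) (hua : G.Adj u a) (hux : G.Adj u x) (hax : a ≠ x)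
    (hqa : ¬ G.Adj a q) (hqa' : q ≠ a) (hqu : q ≠ u) (hqx : q ≠ x) :
    m+6 ≤ degS G x := by
  have hNu : G.neighborSet u = {a, x} := nbr_eq_pair hu2 hua hux hax
  have hnadj : ¬ G.Adj u q := by
    intro h
    have hq : q ∈ G.neighborSet u := h
    rw [hNu] at hq
    rcases hq with h1 | h1
    · exact hqa' h1
    · exact hqx h1
  have hne : u ≠ q := fun h => hqu h.symm
  obtain ⟨f, hf, c, d, hcd, hfc, hfd⟩ := hG u q hne hnadj
  obtain ⟨i, rfl, himg⟩ := rim_exact_fst hne hnadj hf hfc hu2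
  have hhmem : f (Sum.inl ()) ∈ insert q (G.neighborSet u) := by
    rw [← himg]
    exact ⟨Sum.inl (), mem_wheel_nbr_rim.mpr (Or.inl rfl), rfl⟩
  have hhu : f (Sum.inl ()) ≠ u := fun hcon => Sum.inl_ne_inr (hf (hcon.trans hfc.symm))
  by_cases hhq : f (Sum.inl ()) = q
  · exfalso
    have hamem : a ∈ insert q (G.neighborSet u) := Set.mem_insert_of_mem _ hua
    rw [← himg] at hamem
    obtain ⟨z, hz, hfz⟩ := hamem
    rcases mem_wheel_nbr_rim.mp hz with h0 | ⟨l, hl, h0⟩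
    · subst h0
      exact hqa' (hhq.symm.trans hfz)
    · subst h0
      have hadj : (G ⊔ fromEdgeSet {s(u,q)}).Adj (f (Sum.inl ())) (f (Sum.inr l)) :=
        f.map_adj (wheel_adj_hub l)
      rw [hfz, hhq] at hadj
      have hau : a ≠ u := hua.ne'
      exact hqa (adj_of_sup_adj hne hau hqa'.symm hadj.symm)
  · have hhmem' : f (Sum.inl ()) ∈ G.neighborSet u := by
      rcases hhmem with hcon | hmem
      · exact absurd hcon hhq
      · exact hmem
    rw [hNu] at hhmem'
    rcases hhmem' with hha | hhx
    · exfalso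
      obtain ⟨j, rfl⟩ : ∃ j, d = Sum.inr j := by
        cases d with
        | inl a0 =>
          exfalso
          apply hhq
          cases a0
          exact hfd
        | inr j => exact ⟨j, rfl⟩
      have hadj : (G ⊔ fromEdgeSet {s(u,q)}).Adj (f (Sum.inl ())) (f (Sum.inr j)) :=
        f.map_adj (wheel_adj_hub j)
      rw [hfd, hha] at hadj
      have hau : a ≠ u := hua.ne'
      exact hqa (adj_of_sup_adj hne hau hqa'.symm hadj)
    · rw [← hhx]
      exact hub_deg hne hf hhu hhq

lemma bignbr (hG : IsSemiSat (wheel (m+6)) G) (hn8 : m+8 ≤ n) {u : Fin n}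
    (hu2 : degS G u = 2) : ∃ h, G.Adj u h ∧ m+6 ≤ degS G h := by
  obtain ⟨p, q, hpq, hup, huq, hset⟩ := nbr_pair_of_deg2 hu2
  by_cases hex : ∃ r, ¬G.Adj p r ∧ r ≠ p ∧ r ≠ q
  · obtain ⟨r, hr1, hr2, hr3⟩ := hex
    have hru : r ≠ u := by
      rintro rfl
      exact hr1 hup.symm
    exact ⟨q, huq, diamond hG hu2 hup huq hpq hr1 hr2 hru hr3⟩
  · push_neg at hex
    refine ⟨p, hup, ?_⟩
    have hsub : (Set.univ : Set (Fin n)) ⊆ G.neighborSet p ∪ {p, q} := by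
      intro r _
      by_cases h1 : G.Adj p r
      · exact Or.inl h1
      · by_cases h2 : r = p
        · exact Or.inr (Or.inl h2)
        · exact Or.inr (Or.inr (hex r h1 h2))
    have h3 := Set.ncard_le_ncard hsub (Set.toFinite _)
    rw [Set.ncard_univ] at h3
    simp only [Nat.card_eq_fintype_card, Fintype.card_fin] at h3
    have h4 := Set.ncard_union_le (G.neighborSet p) ({p, q} : Set (Fin n))
    have h5 : ({p, q} : Set (Fin n)).ncard = 2 := Set.ncard_pair hpq
    unfold degS
    omega

lemma hubrim (hG : IsSemiSat (wheel (m+6)) G) (hn : 2 ≤ n)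
    (hdeg : ∀ x : Fin n, degS G x ≤ n - 2) {u₁ u₂ a x₁ x₂ : Fin n}
    (hu₁ : degS G u₁ = 2) (hu₂ : degS G u₂ = 2) (hne : u₁ ≠ u₂)
    (hN₁ : G.neighborSet u₁ = {a, x₁}) (hN₂ : G.neighborSet u₂ = {a, x₂})
    (hx12 : x₁ ≠ x₂) (hax1 : a ≠ x₁) (hax2 : a ≠ x₂) :
    ∃ Rim : Set (Fin n), Rim ⊆ G.neighborSet a ∧ Rim.ncard = m+6 ∧
      ∀ w ∈ Rim, w = u₁ ∨ w = u₂ ∨ 3 ≤ degS G w := by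
  have hnadj : ¬ G.Adj u₁ u₂ := C_nonadj hG hn hdeg hu₁ hu₂
  obtain ⟨f, hf, c, d, hcd, hfc, hfd⟩ := hG u₁ u₂ hne hnadj
  obtain ⟨i, rfl, himgu⟩ := rim_exact_fst hne hnadj hf hfc hu₁
  obtain ⟨j, rfl, himgv⟩ := rim_exact_snd hne hnadj hf hfd hu₂
  -- the hub equals a
  have hhmem1 : f (Sum.inl ()) ∈ insert u₂ (G.neighborSet u₁) := by
    rw [← himgu]
    exact ⟨Sum.inl (), mem_wheel_nbr_rim.mpr (Or.inl rfl), rfl⟩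
  have hhmem2 : f (Sum.inl ()) ∈ insert u₁ (G.neighborSet u₂) := by
    rw [← himgv]
    exact ⟨Sum.inl (), mem_wheel_nbr_rim.mpr (Or.inl rfl), rfl⟩
  have hh1 : f (Sum.inl ()) ≠ u₁ := fun hcon => Sum.inl_ne_inr (hf (hcon.trans hfc.symm))
  have hh2 : f (Sum.inl ()) ≠ u₂ := fun hcon => Sum.inl_ne_inr (hf (hcon.trans hfd.symm))
  have hha : f (Sum.inl ()) = a := by
    have m1 : f (Sum.inl ()) ∈ G.neighborSet u₁ := by
      rcases hhmem1 with hcon | hmem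
      · exact absurd hcon hh2
      · exact hmem
    have m2 : f (Sum.inl ()) ∈ G.neighborSet u₂ := by
      rcases hhmem2 with hcon | hmem
      · exact absurd hcon hh1
      · exact hmem
    rw [hN₁] at m1
    rw [hN₂] at m2
    rcases m1 with e1 | e1
    · exact e1
    · rcases m2 with e2 | e2
      · exact e2
      · exact absurd (e1.symm.trans e2) hx12
  have hau1 : a ≠ u₁ := by
    intro hcon
    have : a ∈ G.neighborSet u₁ := by rw [hN₁]; exact Or.inl rfl
    rw [hcon] at this
    exact G.irrefl this
  have hau2 : a ≠ u₂ := by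
    intro hcon
    have : a ∈ G.neighborSet u₂ := by rw [hN₂]; exact Or.inl rfl
    rw [hcon] at this
    exact G.irrefl this
  refine ⟨f '' Set.range Sum.inr, ?_, ?_, ?_⟩
  · rintro w ⟨z, ⟨l, rfl⟩, rfl⟩
    have hadj := hub_adj_G hne (f := f) (hha ▸ hau1) (hha ▸ hau2) l
    rw [hha] at hadj
    exact hadj
  · rw [Set.ncard_image_of_injective _ hf, ncard_range_inr]
  · rintro w ⟨z, ⟨l, rfl⟩, rfl⟩
    by_cases h1 : f (Sum.inr l) = u₁
    · exact Or.inl h1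
    by_cases h2 : f (Sum.inr l) = u₂
    · exact Or.inr (Or.inl h2)
    refine Or.inr (Or.inr ?_)
    have h3 := image_deg3 hf (Sum.inr l)
    rwa [degS_sup_of_ne hne h1 h2] at h3

lemma exists_surplus {n m : ℕ} {G : SimpleGraph (Fin n)} (hG : IsSemiSat (wheel (m+6)) G)
    (hdeg : ∀ x : Fin n, degS G x ≤ n - 2) (hn8 : m+8 ≤ n) (hn2 : 2 ≤ n)
    (R : Finset (Fin n)) (CR : Finset (Fin n))
    (hCR : ∀ u : Fin n, u ∈ CR ↔ u ∈ R ∧ degS G u = 2)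
    (hhard : (n : ℤ) - R.card < CR.card) :
    ∃ S : Finset (Fin n), (∀ v ∈ S, v ∈ R ∧ degS G v ≠ 2) ∧
      (CR.card : ℤ) - ((n : ℤ) - R.card) ≤ ∑ v ∈ S, ((degS G v : ℤ) - 3) := by
  classical
  have hrn : R.card ≤ n := le_trans (Finset.card_le_univ R) (by simp)
  have hM0 : (0:ℤ) ≤ (n:ℤ) - R.card := by
    have := hrn; push_cast; omega
  have hCR2 : ∀ u ∈ CR, degS G u = 2 := fun u hu => ((hCR u).mp hu).2
  have hCRR : ∀ u ∈ CR, u ∈ R := fun u hu => ((hCR u).mp hu).1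
  have hpos : 0 < CR.card := by
    have h1 : (0:ℤ) < CR.card := lt_of_le_of_lt hM0 hhard
    exact_mod_cast h1
  have sum_big : ∀ S : Finset (Fin n), (∀ v ∈ S, m+6 ≤ degS G v) →
      (S.card : ℤ) ≤ ∑ v ∈ S, ((degS G v : ℤ) - 3) := by
    intro S hS
    calc (S.card : ℤ) = ∑ _v ∈ S, (1:ℤ) := by simp
      _ ≤ ∑ v ∈ S, ((degS G v : ℤ) - 3) := by
          apply Finset.sum_le_sum
          intro v hv
          have h1 := hS v hv
          have h2 : (m:ℤ) + 6 ≤ (degS G v : ℤ) := by exact_mod_cast h1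
          linarith
  by_cases hcard1 : CR.card = 1
  · -- then R = univ
    obtain ⟨u₁, hu₁⟩ := Finset.card_pos.mp hpos
    have hRn : R.card = n := by
      rw [hcard1] at hhard
      push_cast at hhard
      omega
    have hRuniv : R = Finset.univ := Finset.eq_univ_of_card R (by rw [hRn]; simp)
    obtain ⟨h, hadj, hbig⟩ := bignbr hG hn8 (hCR2 u₁ hu₁)
    refine ⟨{h}, ?_, ?_⟩
    · intro v hv
      rw [Finset.mem_singleton] at hv
      subst hv
      exact ⟨by rw [hRuniv]; exact Finset.mem_univ _, by omega⟩
    · rw [Finset.sum_singleton, hcard1, hRn]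
      have h2 : (m:ℤ) + 6 ≤ (degS G h : ℤ) := by exact_mod_cast hbig
      push_cast
      linarith
  · -- CR.card ≥ 2
    have hcard2 : 1 < CR.card := by omega
    obtain ⟨u₁, hu₁, u₂, hu₂, hne12⟩ := Finset.one_lt_card.mp hcard2
    have d₁ := hCR2 u₁ hu₁
    have d₂ := hCR2 u₂ hu₂
    obtain ⟨a, habig, hau₁, hau₂⟩ :=
      star_lemma hG (by omega) (by omega) hne12 (C_nonadj hG hn2 hdeg d₁ d₂)
    by_cases hcom : ∀ u ∈ CR, G.Adj u a
    · -- COMMON case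
      have hxex : ∀ u : Fin n, ∃ xu : Fin n,
          u ∈ CR → (G.Adj u xu ∧ xu ≠ a ∧ G.neighborSet u = {a, xu}) := by
        intro u
        by_cases hu : u ∈ CR
        · have hd := hCR2 u hu
          have hadjua := hcom u hu
          obtain ⟨p, q, hpq, hup, huq, hset⟩ := nbr_pair_of_deg2 hd
          have hamem : a ∈ ({p, q} : Set (Fin n)) := by
            rw [← hset]; exact hadjua
          rcases hamem with h | h
          · subst h
            exact ⟨q, fun _ => ⟨huq, hpq.symm, hset⟩⟩
          · subst h
            exact ⟨p, fun _ => ⟨hup, hpq, by rw [hset, Set.pair_comm]⟩⟩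
        · exact ⟨a, fun hc => absurd hc hu⟩
      choose xf hxf using hxex
      have hxadj : ∀ u ∈ CR, G.Adj u (xf u) := fun u hu => (hxf u hu).1
      have hxne : ∀ u ∈ CR, xf u ≠ a := fun u hu => (hxf u hu).2.1
      have hxset : ∀ u ∈ CR, G.neighborSet u = {a, xf u} := fun u hu => (hxf u hu).2.2
      have hxinj : ∀ u ∈ CR, ∀ u' ∈ CR, xf u = xf u' → u = u' := by
        intro u hu u' hu' hxx
        by_contra hneq
        exact hneq (pair_distinct hG (hCR2 u hu) (hCR2 u' hu')
          (C_nonadj hG hn2 hdeg (hCR2 u hu) (hCR2 u' hu'))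
          (by rw [hxset u hu, hxset u' hu', hxx]))
      have hxdeg3 : ∀ u ∈ CR, 3 ≤ degS G (xf u) :=
        fun u hu => nbr_deg3 hG hn2 hdeg (hCR2 u hu) (hxadj u hu)
      by_cases haR : a ∈ R
      · -- surplus at a
        refine ⟨{a}, ?_, ?_⟩
        · intro v hv
          rw [Finset.mem_singleton] at hv
          subst hv
          exact ⟨haR, by omega⟩
        · rw [Finset.sum_singleton]
          obtain ⟨Rim, hRsub, hRcard, hRprop⟩ := hubrim hG hn2 hdeg d₁ d₂ hne12
            (hxset u₁ hu₁) (hxset u₂ hu₂)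
            (fun h => hne12 (hxinj u₁ hu₁ u₂ hu₂ h))
            ((hxne u₁ hu₁).symm) ((hxne u₂ hu₂).symm)
          have hsub2 : ((↑CR : Set (Fin n)) \ {u₁, u₂}) ∪ Rim ⊆ G.neighborSet a := by
            rintro w (⟨hw, _⟩ | hw)
            · exact (hcom w (Finset.mem_coe.mp hw)).symm
            · exact hRsub hw
          have hdisj : Disjoint ((↑CR : Set (Fin n)) \ {u₁, u₂}) Rim := by
            rw [Set.disjoint_left]
            rintro w ⟨hw1, hw2⟩ hwR
            rcases hRprop w hwR with rfl | rfl | h3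
            · exact hw2 (Or.inl rfl)
            · exact hw2 (Or.inr rfl)
            · have := hCR2 w (Finset.mem_coe.mp hw1); omega
          have hcard2' := Set.ncard_le_ncard hsub2 (Set.toFinite _)
          rw [Set.ncard_union_eq hdisj (Set.toFinite _) (Set.toFinite _), hRcard] at hcard2'
          have hdiffcard : CR.card ≤ ((↑CR : Set (Fin n)) \ {u₁, u₂}).ncard + 2 := by
            have h1 := Set.ncard_le_ncard_diff_add_ncard (↑CR : Set (Fin n))
              ({u₁, u₂} : Set (Fin n)) (Set.toFinite _)
            have h2 : ({u₁, u₂} : Set (Fin n)).ncard ≤ 2 := by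
              apply le_trans (Set.ncard_insert_le _ _)
              simp
            rw [Set.ncard_coe_finset] at h1
            omega
          have hda : CR.card + m + 4 ≤ degS G a := by
            unfold degS
            omega
          have hda' : (CR.card : ℤ) + m + 4 ≤ (degS G a : ℤ) := by exact_mod_cast hda
          linarith
      · -- a ∉ R : use the big x's
        have haout : a ∈ Finset.univ \ R := by
          rw [Finset.mem_sdiff]; exact ⟨Finset.mem_univ _, haR⟩
        set Big := CR.filter (fun u => xf u ∈ R ∧ m+6 ≤ degS G (xf u)) with hBig
        set Nonbig := CR.filter (fun u => ¬ (m+6 ≤ degS G (xf u))) with hNonbig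
        set Out := CR.filter (fun u => xf u ∉ R) with hOut
        -- Nonbig has at most one element
        have hNB1 : Nonbig.card ≤ 1 := by
          rw [Finset.card_le_one]
          intro u hu u' hu'
          rw [hNonbig, Finset.mem_filter] at hu hu'
          obtain ⟨huCR, husm⟩ := hu
          obtain ⟨hu'CR, hu'sm⟩ := hu'
          obtain ⟨q, hqa, hqna⟩ := exists_nonadj hn2 (hdeg a)
          have hkey : ∀ w ∈ CR, ¬ (m+6 ≤ degS G (xf w)) → xf w = q := by
            intro w hw hsm
            by_contra hne
            apply hsm
            refine diamond hG (hCR2 w hw) ((hcom w hw)) (hxadj w hw)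
              ((hxne w hw).symm) hqna hqa ?_ (fun hc => hne hc.symm)
            · intro hc
              apply hqna
              rw [hc]
              exact (hcom w hw).symm
          have e1 := hkey u huCR husm
          have e2 := hkey u' hu'CR hu'sm
          exact hxinj u huCR u' hu'CR (e1.trans e2.symm)
        -- Out has at most (n - R.card) - 1 elements
        have hOutcard : (Out.card : ℤ) ≤ ((n:ℤ) - R.card) - 1 := by
          have himg : Out.image xf ⊆ (Finset.univ \ R).erase a := by
            intro y hy
            rw [Finset.mem_image] at hy
            obtain ⟨w, hw, rfl⟩ := hy
            rw [hOut, Finset.mem_filter] at hw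
            rw [Finset.mem_erase, Finset.mem_sdiff]
            exact ⟨hxne w hw.1, Finset.mem_univ _, hw.2⟩
          have hinj2 : (Out.image xf).card = Out.card := by
            apply Finset.card_image_of_injOn
            intro w hw w' hw' hxx
            have hw1 := (Finset.mem_filter.mp (Finset.mem_coe.mp hw)).1
            have hw2 := (Finset.mem_filter.mp (Finset.mem_coe.mp hw')).1
            exact hxinj w hw1 w' hw2 hxx
          have h3 := Finset.card_le_card himg
          rw [hinj2] at h3
          have h4 : ((Finset.univ \ R).erase a).card = (Finset.univ \ R).card - 1 :=
            Finset.card_erase_of_mem haout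
          have h5 : (Finset.univ \ R).card = n - R.card := by
            rw [Finset.card_sdiff_of_subset (Finset.subset_univ R)]
            simp
          have h6 : 1 ≤ (Finset.univ \ R).card := Finset.card_pos.mpr ⟨a, haout⟩
          push_cast
          omega
        -- CR covered
        have hcover : CR ⊆ Big ∪ Nonbig ∪ Out := by
          intro u hu
          by_cases h1 : m+6 ≤ degS G (xf u)
          · by_cases h2 : xf u ∈ R
            · exact Finset.mem_union_left _ (Finset.mem_union_left _
                (by rw [hBig, Finset.mem_filter]; exact ⟨hu, h2, h1⟩))
            · exact Finset.mem_union_right _ (by rw [hOut, Finset.mem_filter]; exact ⟨hu, h2⟩)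
          · exact Finset.mem_union_left _ (Finset.mem_union_right _
              (by rw [hNonbig, Finset.mem_filter]; exact ⟨hu, h1⟩))
        have hcount : CR.card ≤ Big.card + Nonbig.card + Out.card := by
          calc CR.card ≤ (Big ∪ Nonbig ∪ Out).card := Finset.card_le_card hcover
            _ ≤ (Big ∪ Nonbig).card + Out.card := Finset.card_union_le _ _
            _ ≤ Big.card + Nonbig.card + Out.card := by
                have := Finset.card_union_le Big Nonbig
                omega
        -- S := image of Big under xf
        refine ⟨Big.image xf, ?_, ?_⟩
        · intro v hv
          rw [Finset.mem_image] at hv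
          obtain ⟨w, hw, rfl⟩ := hv
          rw [hBig, Finset.mem_filter] at hw
          exact ⟨hw.2.1, by omega⟩
        · have hScard : (Big.image xf).card = Big.card := by
            apply Finset.card_image_of_injOn
            intro w hw w' hw' hxx
            have hw1 := (Finset.mem_filter.mp (Finset.mem_coe.mp hw)).1
            have hw2 := (Finset.mem_filter.mp (Finset.mem_coe.mp hw')).1
            exact hxinj w hw1 w' hw2 hxx
          have hSbig : ∀ v ∈ Big.image xf, m+6 ≤ degS G v := by
            intro v hv
            rw [Finset.mem_image] at hv
            obtain ⟨w, hw, rfl⟩ := hv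
            rw [hBig, Finset.mem_filter] at hw
            exact hw.2.2
          have h7 := sum_big _ hSbig
          rw [hScard] at h7
          have h8 : (CR.card : ℤ) ≤ Big.card + Nonbig.card + Out.card := by exact_mod_cast hcount
          have h9 : (Nonbig.card : ℤ) ≤ 1 := by exact_mod_cast hNB1
          linarith
    · -- TRIANGLE case
      push_neg at hcom
      obtain ⟨u₃, hu₃, h3na⟩ := hcom
      have d₃ := hCR2 u₃ hu₃
      have hne13 : u₁ ≠ u₃ := by rintro rfl; exact h3na hau₁
      have hne23 : u₂ ≠ u₃ := by rintro rfl; exact h3na hau₂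
      obtain ⟨b, hbbig, hbu₁, hbu₃⟩ :=
        star_lemma hG (by omega) (by omega) hne13 (C_nonadj hG hn2 hdeg d₁ d₃)
      obtain ⟨c, hcbig, hcu₂, hcu₃⟩ :=
        star_lemma hG (by omega) (by omega) hne23 (C_nonadj hG hn2 hdeg d₂ d₃)
      have hba : b ≠ a := by rintro rfl; exact h3na hbu₃
      have hca : c ≠ a := by rintro rfl; exact h3na hcu₃
      have hbc : b ≠ c := by
        rintro rfl
        apply hne12
        apply pair_distinct hG d₁ d₂ (C_nonadj hG hn2 hdeg d₁ d₂)
        rw [nbr_eq_pair d₁ hau₁ hbu₁ hba.symm, nbr_eq_pair d₂ hau₂ hcu₂ hca.symm]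
      have hN₁ : G.neighborSet u₁ = {a, b} := nbr_eq_pair d₁ hau₁ hbu₁ hba.symm
      have hN₂ : G.neighborSet u₂ = {a, c} := nbr_eq_pair d₂ hau₂ hcu₂ hca.symm
      have hN₃ : G.neighborSet u₃ = {b, c} := nbr_eq_pair d₃ hbu₃ hcu₃ hbc
      -- CR ⊆ {u₁, u₂, u₃}
      have hsub3 : CR ⊆ {u₁, u₂, u₃} := by
        intro u₄ hu₄
        by_contra hnotin
        simp only [Finset.mem_insert, Finset.mem_singleton] at hnotin
        push_neg at hnotin
        obtain ⟨hn1, hn2', hn3⟩ := hnotin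
        have d₄ := hCR2 u₄ hu₄
        obtain ⟨h1, h1big, h1u₄, h1u₁⟩ :=
          star_lemma hG (by omega) (by omega) hn1 (C_nonadj hG hn2 hdeg d₄ d₁)
        obtain ⟨h2, h2big, h2u₄, h2u₂⟩ :=
          star_lemma hG (by omega) (by omega) hn2' (C_nonadj hG hn2 hdeg d₄ d₂)
        obtain ⟨h3, h3big, h3u₄, h3u₃⟩ :=
          star_lemma hG (by omega) (by omega) hn3 (C_nonadj hG hn2 hdeg d₄ d₃)
        have h1mem : h1 = a ∨ h1 = b := by
          have : h1 ∈ G.neighborSet u₁ := h1u₁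
          rwa [hN₁] at this
        have h2mem : h2 = a ∨ h2 = c := by
          have : h2 ∈ G.neighborSet u₂ := h2u₂
          rwa [hN₂] at this
        have h3mem : h3 = b ∨ h3 = c := by
          have : h3 ∈ G.neighborSet u₃ := h3u₃
          rwa [hN₃] at this
        by_cases hada : G.Adj u₄ a
        · rcases h3mem with rfl | rfl
          · -- N u₄ = {a, b} = N u₁
            apply hn1
            apply pair_distinct hG d₄ d₁ (C_nonadj hG hn2 hdeg d₄ d₁)
            rw [nbr_eq_pair d₄ hada h3u₄ hba.symm, hN₁]
          · apply hn2'
            apply pair_distinct hG d₄ d₂ (C_nonadj hG hn2 hdeg d₄ d₂)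
            rw [nbr_eq_pair d₄ hada h3u₄ hca.symm, hN₂]
        · have h1b : h1 = b := by
            rcases h1mem with rfl | rfl
            · exact absurd h1u₄ hada
            · rfl
          have h2c : h2 = c := by
            rcases h2mem with rfl | rfl
            · exact absurd h2u₄ hada
            · rfl
          subst h1b; subst h2c
          apply hn3
          apply pair_distinct hG d₄ d₃ (C_nonadj hG hn2 hdeg d₄ d₃)
          rw [nbr_eq_pair d₄ h1u₄ h2u₄ hbc, hN₃]
      have hCR3 : CR.card ≤ 3 := by
        apply le_trans (Finset.card_le_card hsub3)
        apply le_trans (Finset.card_insert_le _ _)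
        have := Finset.card_insert_le u₂ ({u₃} : Finset (Fin n))
        simp only [Finset.card_singleton] at this
        omega
      by_cases habcR : a ∈ R ∨ b ∈ R ∨ c ∈ R
      · -- a big vertex inside R
        obtain ⟨w, hwR, hwbig⟩ : ∃ w, w ∈ R ∧ m+6 ≤ degS G w := by
          rcases habcR with h | h | h
          · exact ⟨a, h, habig⟩
          · exact ⟨b, h, hbbig⟩
          · exact ⟨c, h, hcbig⟩
        refine ⟨{w}, ?_, ?_⟩
        · intro v hv
          rw [Finset.mem_singleton] at hv
          subst hv
          exact ⟨hwR, by omega⟩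
        · rw [Finset.sum_singleton]
          have h2 : (m:ℤ) + 6 ≤ (degS G w : ℤ) := by exact_mod_cast hwbig
          have h3 : (CR.card : ℤ) ≤ 3 := by exact_mod_cast hCR3
          linarith
      · -- a, b, c all outside R : then n - R.card ≥ 3 ≥ CR.card, contradiction
        exfalso
        push_neg at habcR
        obtain ⟨haR, hbR, hcR⟩ := habcR
        have hsubabc : ({a, b, c} : Finset (Fin n)) ⊆ Finset.univ \ R := by
          intro w hw
          simp only [Finset.mem_insert, Finset.mem_singleton] at hw
          rw [Finset.mem_sdiff]
          rcases hw with rfl | rfl | rfl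
          · exact ⟨Finset.mem_univ _, haR⟩
          · exact ⟨Finset.mem_univ _, hbR⟩
          · exact ⟨Finset.mem_univ _, hcR⟩
        have habccard : ({a, b, c} : Finset (Fin n)).card = 3 := by
          rw [Finset.card_insert_of_notMem (by simp [hba.symm, hca.symm]),
            Finset.card_insert_of_notMem (by simp [hbc]), Finset.card_singleton]
        have h4 := Finset.card_le_card hsubabc
        rw [habccard] at h4
        have h5 : (Finset.univ \ R).card = n - R.card := by
          rw [Finset.card_sdiff_of_subset (Finset.subset_univ R)]
          simp
        have h6 : (3:ℤ) ≤ (n:ℤ) - R.card := by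
          rw [h5] at h4
          push_cast
          omega
        have h7 : (CR.card : ℤ) ≤ 3 := by exact_mod_cast hCR3
        linarith

end structural

/-- Lemma 3.4: for every vertex set `R`,
`Σ_{v ∈ R} deg(v) ≥ 3|R| - min{|C_G|, n - |R|}`. -/
theorem degree_sum_lower_bound (k n : ℕ) (hk : 6 ≤ k) (hn : (k - 1) ^ 2 + 1 ≤ n)
    (G : SimpleGraph (Fin n)) (hG : IsSemiSat (wheel k) G)
    (hdeg : ∀ v : Fin n, degS G v ≤ n - 2) (R : Finset (Fin n)) :
    3 * (R.card : ℤ) - min ((setC G).ncard : ℤ) ((n : ℤ) - R.card) ≤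
      ∑ v ∈ R, (degS G v : ℤ) := by
  classical
  obtain ⟨m, rfl⟩ : ∃ m, k = m + 6 := ⟨k - 6, by omega⟩
  have h65 : m + 6 - 1 = m + 5 := by omega
  rw [h65] at hn
  have hn8 : m + 8 ≤ n := by nlinarith
  have hn2 : 2 ≤ n := by omega
  have hrn : R.card ≤ n := le_trans (Finset.card_le_univ R) (by simp)
  set CR := R.filter (fun v => degS G v = 2) with hCRdef
  have hCRiff : ∀ u : Fin n, u ∈ CR ↔ u ∈ R ∧ degS G u = 2 := by
    intro u; rw [hCRdef, Finset.mem_filter]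
  have hCle : (CR.card : ℤ) ≤ ((setC G).ncard : ℤ) := by
    have hsub : (↑CR : Set (Fin n)) ⊆ setC G := by
      intro u hu
      exact ((hCRiff u).mp (Finset.mem_coe.mp hu)).2
    have h1 := Set.ncard_le_ncard hsub (Set.toFinite _)
    rw [Set.ncard_coe_finset] at h1
    exact_mod_cast h1
  have hmin2 : ∀ x, 2 ≤ degS G x := min_deg2 hG hn2 hdeg
  have key : ∀ S : Finset (Fin n), (∀ v ∈ S, v ∈ R ∧ degS G v ≠ 2) →
      3*(R.card:ℤ) - CR.card + ∑ v ∈ S, ((degS G v:ℤ) - 3) ≤ ∑ v ∈ R, (degS G v : ℤ) := by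
    intro S hS
    set T := R.filter (fun v => ¬ degS G v = 2) with hT
    have hTsub : S ⊆ T := by
      intro v hv
      rw [hT, Finset.mem_filter]
      exact ⟨(hS v hv).1, (hS v hv).2⟩
    have hsplit := Finset.sum_filter_add_sum_filter_not R (fun v => degS G v = 2)
      (fun v => (degS G v : ℤ))
    rw [← hCRdef, ← hT] at hsplit
    have h1 : ∑ v ∈ CR, (degS G v:ℤ) = 2 * CR.card := by
      have hc : ∀ v ∈ CR, ((degS G v : ℤ)) = 2 := by
        intro v hv
        have := ((hCRiff v).mp hv).2
        exact_mod_cast congrArg (Nat.cast : ℕ → ℤ) this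
      rw [Finset.sum_congr rfl hc, Finset.sum_const, nsmul_eq_mul]
      ring
    have h2 := Finset.sum_sdiff (f := fun v => (degS G v : ℤ)) hTsub
    have h3 : 3*(((T \ S).card) : ℤ) ≤ ∑ v ∈ T \ S, (degS G v:ℤ) := by
      calc 3*(((T \ S).card) : ℤ) = ∑ _v ∈ T \ S, (3:ℤ) := by
            rw [Finset.sum_const, nsmul_eq_mul]; ring
        _ ≤ ∑ v ∈ T \ S, (degS G v:ℤ) := by
            apply Finset.sum_le_sum
            intro v hv
            have hvT : v ∈ T := (Finset.mem_sdiff.mp hv).1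
            rw [hT, Finset.mem_filter] at hvT
            have := hmin2 v
            have h5 : 3 ≤ degS G v := by omega
            exact_mod_cast h5
    have hScard : S.card ≤ T.card := Finset.card_le_card hTsub
    have hcards : ((T \ S).card : ℤ) = (T.card : ℤ) - S.card := by
      rw [Finset.card_sdiff_of_subset hTsub]
      push_cast [Nat.cast_sub hScard]
      ring
    have hTcard : (T.card : ℤ) + CR.card = R.card := by
      have := Finset.card_filter_add_card_filter_not
        (s := R) (p := fun v => degS G v = 2)
      rw [← hCRdef, ← hT] at this
      push_cast [← this]
      ring
    have hsum_sub : ∑ v ∈ S, ((degS G v:ℤ) - 3) = (∑ v ∈ S, (degS G v:ℤ)) - 3*S.card := by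
      rw [Finset.sum_sub_distrib, Finset.sum_const, nsmul_eq_mul]
      ring
    rw [hsum_sub]
    linarith [hsplit, h1, h2, h3, hcards, hTcard]
  rcases le_or_gt (CR.card:ℤ) ((n:ℤ) - R.card) with hcase | hcase
  · have h0 := key ∅ (by simp)
    simp only [Finset.sum_empty, add_zero] at h0
    have hminge : (CR.card : ℤ) ≤ min ((setC G).ncard : ℤ) ((n:ℤ) - R.card) :=
      le_min hCle hcase
    linarith
  · obtain ⟨S, hS1, hS2⟩ := exists_surplus hG hdeg hn8 hn2 R CR hCRiff hcase
    have h0 := key S hS1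
    have hmineq : min ((setC G).ncard : ℤ) ((n:ℤ) - R.card) = (n:ℤ) - R.card :=
      min_eq_right (le_of_lt (lt_of_lt_of_le hcase hCle))
    rw [hmineq]
    linarith
end

section
/- Let k ≥ 6 and n ≥ (k−1)² + 1 be integers, and let G be a W_k-semi-saturated graph on n vertices with maximum degree at most n − 2 and with |A*_G| ≥ k. If no vertex of G is adjacent to every vertex of A*_G (i.e. the intersection of the neighbourhoods N(v) over all v ∈ A*_G is empty), then 2·e(G) ≥ 5n − 6(k−1)². -/
open SimpleGraph

section AuxNoGrand
open Finset
open Fin.CommRing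

variable {n : ℕ} {G : SimpleGraph (Fin n)}

private lemma adj_of_sup' {u v x y : Fin n}
    (h : (G ⊔ fromEdgeSet {s(u, v)}).Adj x y) (hx : x ≠ u) (hx' : x ≠ v) :
    G.Adj x y := by
  rcases (SimpleGraph.sup_adj ..).1 h with h | h
  · exact h
  · rw [SimpleGraph.fromEdgeSet_adj] at h
    rcases Sym2.eq_iff.1 (Set.mem_singleton_iff.1 h.1) with ⟨h1, _⟩ | ⟨h1, _⟩
    · exact absurd h1 hx
    · exact absurd h1 hx'

private lemma sup_adj_mem [DecidableRel G.Adj] {u v w : Fin n}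
    (h : (G ⊔ fromEdgeSet {s(u, v)}).Adj u w) : w ∈ insert v (G.neighborFinset u) := by
  rcases (SimpleGraph.sup_adj ..).1 h with h | h
  · exact mem_insert_of_mem (by rwa [SimpleGraph.mem_neighborFinset])
  · rw [SimpleGraph.fromEdgeSet_adj] at h
    rcases Sym2.eq_iff.1 (Set.mem_singleton_iff.1 h.1) with ⟨_, h2⟩ | ⟨h1, h2⟩
    · exact mem_insert.2 (Or.inl h2)
    · exact absurd h2.symm h.2

/-- The image of the hub has `G`-degree at least `k`, provided it avoids `u, v`. -/
private lemma hub_degree [DecidableRel G.Adj] {k : ℕ} {u v : Fin n}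
    {f : wheel k →g (G ⊔ fromEdgeSet {s(u, v)})} (hinj : Function.Injective f)
    (h1 : f (Sum.inl ()) ≠ u) (h2 : f (Sum.inl ()) ≠ v) :
    k ≤ G.degree (f (Sum.inl ())) := by
  classical
  have hsub : (Finset.univ.image fun j : Fin k => f (Sum.inr j)) ⊆
      G.neighborFinset (f (Sum.inl ())) := by
    intro w hw
    simp only [Finset.mem_image] at hw
    obtain ⟨j, _, rfl⟩ := hw
    rw [SimpleGraph.mem_neighborFinset]
    have hadj : (wheel k).Adj (Sum.inl ()) (Sum.inr j) := trivial
    exact adj_of_sup' (f.map_adj hadj) h1 h2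
  calc k = (Finset.univ : Finset (Fin k)).card := by simp
    _ = (Finset.univ.image fun j : Fin k => f (Sum.inr j)).card := by
        rw [Finset.card_image_of_injective _ (fun a b hab => Sum.inr_injective (hinj hab))]
    _ ≤ _ := Finset.card_le_card hsub
  
/-- The image of a cycle vertex has `G`-degree at least `3`, provided it avoids `u, v`. -/
private lemma cycle_img_degree [DecidableRel G.Adj] {k : ℕ} (hk : 6 ≤ k) {u v : Fin n}
    {f : wheel k →g (G ⊔ fromEdgeSet {s(u, v)})} (hinj : Function.Injective f)
    {i : Fin k} (h1 : f (Sum.inr i) ≠ u) (h2 : f (Sum.inr i) ≠ v) :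
    3 ≤ G.degree (f (Sum.inr i)) := by
  classical
  obtain ⟨m, rfl⟩ : ∃ m, k = m + 6 := ⟨k - 6, by omega⟩
  have hadj1 : (wheel (m+6)).Adj (Sum.inr i) (Sum.inl ()) := trivial
  have hadj2 : (wheel (m+6)).Adj (Sum.inr i) (Sum.inr (i+1)) := by
    show (cycleGraph (m+6)).Adj i (i+1)
    rw [cycleGraph_adj (n := m+4)]; right; ring
  have hadj3 : (wheel (m+6)).Adj (Sum.inr i) (Sum.inr (i-1)) := by
    show (cycleGraph (m+6)).Adj i (i-1)
    rw [cycleGraph_adj (n := m+4)]; left; ring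
  have hne21 : f (Sum.inr (i+1)) ≠ f (Sum.inl ()) := fun h => by simpa using hinj h
  have hne31 : f (Sum.inr (i-1)) ≠ f (Sum.inl ()) := fun h => by simpa using hinj h
  have hne23 : f (Sum.inr (i+1)) ≠ f (Sum.inr (i-1)) := by
    intro h
    have h' : i + 1 = i - 1 := by simpa using hinj h
    have : (2 : Fin (m+6)) = 0 := by linear_combination h'
    have h2 := congrArg Fin.val this
    simp at h2
    rw [Nat.mod_eq_of_lt (by omega)] at h2
    omega
  have hsub : ({f (Sum.inl ()), f (Sum.inr (i+1)), f (Sum.inr (i-1))} : Finset (Fin n)) ⊆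
      G.neighborFinset (f (Sum.inr i)) := by
    intro w hw
    rw [SimpleGraph.mem_neighborFinset]
    simp only [mem_insert, mem_singleton] at hw
    rcases hw with rfl | rfl | rfl
    · exact (adj_of_sup' (f.map_adj hadj1) h1 h2)
    · exact (adj_of_sup' (f.map_adj hadj2) h1 h2)
    · exact (adj_of_sup' (f.map_adj hadj3) h1 h2)
  calc (3 : ℕ) = ({f (Sum.inl ()), f (Sum.inr (i+1)), f (Sum.inr (i-1))} : Finset (Fin n)).card := by
        rw [card_insert_of_notMem (by simp [hne21.symm, hne31.symm]),
          card_insert_of_notMem (by simpa using hne23), card_singleton]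
    _ ≤ _ := Finset.card_le_card hsub

end AuxNoGrand
section AuxNoGrand2
open Finset
open Fin.CommRing

variable {n : ℕ} {G : SimpleGraph (Fin n)}

private lemma sup_adj_mem' [DecidableRel G.Adj] {u v w : Fin n}
    (h : (G ⊔ fromEdgeSet {s(u, v)}).Adj v w) : w ∈ insert u (G.neighborFinset v) := by
  rcases (SimpleGraph.sup_adj ..).1 h with h | h
  · exact mem_insert_of_mem (by rwa [SimpleGraph.mem_neighborFinset])
  · rw [SimpleGraph.fromEdgeSet_adj] at h
    rcases Sym2.eq_iff.1 (Set.mem_singleton_iff.1 h.1) with ⟨h1, h2⟩ | ⟨h1, h2⟩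
    · exact absurd h2.symm h.2
    · exact mem_insert.2 (Or.inl h2)

private lemma exists_nonadj_s15 [DecidableRel G.Adj] (hn : 2 ≤ n) {v : Fin n}
    (h : G.degree v ≤ n - 2) : ∃ w, w ≠ v ∧ ¬ G.Adj v w := by
  have hne : (insert v (G.neighborFinset v)) ≠ univ := by
    intro heq
    have hc := congrArg Finset.card heq
    rw [Finset.card_univ, Fintype.card_fin] at hc
    have h1 : (insert v (G.neighborFinset v)).card ≤ (G.neighborFinset v).card + 1 :=
      Finset.card_insert_le _ _
    rw [SimpleGraph.card_neighborFinset_eq_degree] at h1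
    omega
  have hex : ∃ w, w ∉ insert v (G.neighborFinset v) := by
    by_contra hc
    push_neg at hc
    exact hne (Finset.eq_univ_iff_forall.2 hc)
  obtain ⟨w, hw⟩ := hex
  simp only [mem_insert, not_or] at hw
  exact ⟨w, hw.1, fun ha => hw.2 ((SimpleGraph.mem_neighborFinset ..).2 ha)⟩

/-- the three-element finset of images around a cycle vertex -/
private lemma card_three_image {m : ℕ} {f : (Unit ⊕ Fin (m+6)) → Fin n}
    (hinj : Function.Injective f) (i : Fin (m+6)) :
    ({f (Sum.inl ()), f (Sum.inr (i+1)), f (Sum.inr (i-1))} : Finset (Fin n)).card = 3 := by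
  have hne21 : f (Sum.inr (i+1)) ≠ f (Sum.inl ()) := fun h => by simpa using hinj h
  have hne31 : f (Sum.inr (i-1)) ≠ f (Sum.inl ()) := fun h => by simpa using hinj h
  have hne23 : f (Sum.inr (i+1)) ≠ f (Sum.inr (i-1)) := by
    intro h
    have h' : i + 1 = i - 1 := by simpa using hinj h
    have h0 : (2 : Fin (m+6)) = 0 := by linear_combination h'
    have h2 := congrArg Fin.val h0
    simp at h2
    rw [Nat.mod_eq_of_lt (by omega)] at h2
    omega
  rw [card_insert_of_notMem (by simp [hne21.symm, hne31.symm]),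
    card_insert_of_notMem (by simpa using hne23), card_singleton]

private lemma wheel_cycle_adj_succ {m : ℕ} (i : Fin (m+6)) :
    (wheel (m+6)).Adj (Sum.inr i) (Sum.inr (i+1)) := by
  show (cycleGraph (m+6)).Adj i (i+1)
  rw [cycleGraph_adj (n := m+4)]; right; ring

private lemma wheel_cycle_adj_pred {m : ℕ} (i : Fin (m+6)) :
    (wheel (m+6)).Adj (Sum.inr i) (Sum.inr (i-1)) := by
  show (cycleGraph (m+6)).Adj i (i-1)
  rw [cycleGraph_adj (n := m+4)]; left; ring

private lemma min_degree {k : ℕ} (hk : 6 ≤ k) (hn : 2 ≤ n) [DecidableRel G.Adj]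
    (hG : IsSemiSat (wheel k) G) (hdeg : ∀ v : Fin n, G.degree v ≤ n - 2) (v : Fin n) :
    2 ≤ G.degree v := by
  classical
  obtain ⟨w, hw, hnadj⟩ := exists_nonadj_s15 hn (hdeg v)
  obtain ⟨f, hinj, a, b, hab, ha, hb⟩ := hG v w (Ne.symm hw) hnadj
  have hcard : (insert w (G.neighborFinset v)).card ≤ (G.neighborFinset v).card + 1 :=
    Finset.card_insert_le _ _
  rw [SimpleGraph.card_neighborFinset_eq_degree] at hcard
  match a, ha with
  | Sum.inl (), ha =>
    have hsub : (Finset.univ.image fun j : Fin k => f (Sum.inr j)) ⊆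
        insert w (G.neighborFinset v) := by
      intro x hx
      simp only [Finset.mem_image] at hx
      obtain ⟨j, _, rfl⟩ := hx
      have hadj : (wheel k).Adj (Sum.inl ()) (Sum.inr j) := trivial
      have h2 := f.map_adj hadj
      rw [ha] at h2
      exact sup_adj_mem h2
    have hk' : k ≤ (insert w (G.neighborFinset v)).card := by
      calc k = (Finset.univ : Finset (Fin k)).card := by simp
        _ = (Finset.univ.image fun j : Fin k => f (Sum.inr j)).card := by
            rw [Finset.card_image_of_injective _ (fun a b hab => Sum.inr_injective (hinj hab))]
        _ ≤ _ := Finset.card_le_card hsub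
    omega
  | Sum.inr i, ha =>
    obtain ⟨m, hm⟩ : ∃ m, k = m + 6 := ⟨k - 6, by omega⟩
    subst hm
    have hsub : ({f (Sum.inl ()), f (Sum.inr (i+1)), f (Sum.inr (i-1))} : Finset (Fin n)) ⊆
        insert w (G.neighborFinset v) := by
      intro x hx
      simp only [mem_insert, mem_singleton] at hx
      have hadj1 : (wheel (m+6)).Adj (Sum.inr i) (Sum.inl ()) := trivial
      rcases hx with rfl | rfl | rfl
      · have h2 := f.map_adj hadj1; rw [ha] at h2; exact sup_adj_mem h2
      · have h2 := f.map_adj (wheel_cycle_adj_succ i); rw [ha] at h2; exact sup_adj_mem h2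
      · have h2 := f.map_adj (wheel_cycle_adj_pred i); rw [ha] at h2; exact sup_adj_mem h2
    have h3 : 3 ≤ (insert w (G.neighborFinset v)).card := by
      rw [← card_three_image hinj i]
      exact Finset.card_le_card hsub
    omega

private lemma hub_exists {k : ℕ} (hk : 6 ≤ k) [DecidableRel G.Adj]
    (hG : IsSemiSat (wheel k) G) {u v : Fin n}
    (hu : G.degree u ≤ k - 2) (hv : G.degree v ≤ k - 2)
    (huv : u ≠ v) (hna : ¬ G.Adj u v) :
    ∃ h : Fin n, G.Adj h u ∧ G.Adj h v ∧ k ≤ G.degree h := by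
  classical
  obtain ⟨f, hinj, a, b, hab, ha, hb⟩ := hG u v huv hna
  have hinr : Function.Injective fun j : Fin k => f (Sum.inr j) :=
    fun a b hab => Sum.inr_injective (hinj hab)
  match a, ha with
  | Sum.inl (), ha =>
    exfalso
    have hsub : (Finset.univ.image fun j : Fin k => f (Sum.inr j)) ⊆
        insert v (G.neighborFinset u) := by
      intro x hx
      simp only [Finset.mem_image] at hx
      obtain ⟨j, _, rfl⟩ := hx
      have hadj : (wheel k).Adj (Sum.inl ()) (Sum.inr j) := trivial
      have h2 := f.map_adj hadj
      rw [ha] at h2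
      exact sup_adj_mem h2
    have hk' : k ≤ (insert v (G.neighborFinset u)).card := by
      calc k = (Finset.univ : Finset (Fin k)).card := by simp
        _ = (Finset.univ.image fun j : Fin k => f (Sum.inr j)).card :=
            (Finset.card_image_of_injective _ hinr).symm
        _ ≤ _ := Finset.card_le_card hsub
    have h5 := Finset.card_insert_le v (G.neighborFinset u)
    rw [SimpleGraph.card_neighborFinset_eq_degree] at h5
    omega
  | Sum.inr i, ha =>
    match b, hb with
    | Sum.inl (), hb =>
      exfalso
      have hsub : (Finset.univ.image fun j : Fin k => f (Sum.inr j)) ⊆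
          insert u (G.neighborFinset v) := by
        intro x hx
        simp only [Finset.mem_image] at hx
        obtain ⟨j, _, rfl⟩ := hx
        have hadj : (wheel k).Adj (Sum.inl ()) (Sum.inr j) := trivial
        have h2 := f.map_adj hadj
        rw [hb] at h2
        exact sup_adj_mem' h2
      have hk' : k ≤ (insert u (G.neighborFinset v)).card := by
        calc k = (Finset.univ : Finset (Fin k)).card := by simp
          _ = (Finset.univ.image fun j : Fin k => f (Sum.inr j)).card :=
              (Finset.card_image_of_injective _ hinr).symm
          _ ≤ _ := Finset.card_le_card hsub
      have h5 := Finset.card_insert_le u (G.neighborFinset v)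
      rw [SimpleGraph.card_neighborFinset_eq_degree] at h5
      omega
    | Sum.inr j, hb =>
      have hne_u : f (Sum.inl ()) ≠ u := by
        intro h; simpa using hinj (h.trans ha.symm)
      have hne_v : f (Sum.inl ()) ≠ v := by
        intro h; simpa using hinj (h.trans hb.symm)
      refine ⟨f (Sum.inl ()), ?_, ?_, hub_degree hinj hne_u hne_v⟩
      · have hadj : (wheel k).Adj (Sum.inl ()) (Sum.inr i) := trivial
        have h2 := adj_of_sup' (f.map_adj hadj) hne_u hne_v
        rwa [ha] at h2
      · have hadj : (wheel k).Adj (Sum.inl ()) (Sum.inr j) := trivial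
        have h2 := adj_of_sup' (f.map_adj hadj) hne_u hne_v
        rwa [hb] at h2

end AuxNoGrand2
section AuxNoGrand3
open Finset
open Fin.CommRing

variable {n : ℕ} {G : SimpleGraph (Fin n)}

private lemma fin_nat_ne_zero {m t : ℕ} (h0 : 0 < t) (ht : t < m + 6) :
    (t : Fin (m+6)) ≠ 0 := by
  intro h
  have h2 : ((t : Fin (m+6))).val = t := by rw [Fin.val_natCast]; exact Nat.mod_eq_of_lt ht
  rw [h] at h2
  simp at h2
  omega

private lemma fin_mul_d_ne_zero {m : ℕ} {d : Fin (m+6)} (hd : d = 1 ∨ -d = 1) {t : ℕ}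
    (h0 : 0 < t) (ht : t < m + 6) : (t : Fin (m+6)) * d ≠ 0 := by
  rcases hd with rfl | h
  · simpa using fin_nat_ne_zero h0 ht
  · have hd1 : d = -1 := by linear_combination -h
    rw [hd1, mul_neg_one, neg_ne_zero]
    exact fin_nat_ne_zero h0 ht

private lemma hub_img_ne_left {k : ℕ} (hk : 6 ≤ k) [DecidableRel G.Adj] {u v : Fin n}
    {f : wheel k →g (G ⊔ fromEdgeSet {s(u, v)})} (hinj : Function.Injective f)
    (hu : G.degree u ≤ k - 2) : f (Sum.inl ()) ≠ u := by
  intro hfu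
  have hsub : (Finset.univ.image fun j : Fin k => f (Sum.inr j)) ⊆
      insert v (G.neighborFinset u) := by
    intro x hx
    simp only [Finset.mem_image] at hx
    obtain ⟨j, _, rfl⟩ := hx
    have hadj : (wheel k).Adj (Sum.inl ()) (Sum.inr j) := trivial
    have h2 := f.map_adj hadj
    rw [hfu] at h2
    exact sup_adj_mem h2
  have hk' : k ≤ (insert v (G.neighborFinset u)).card := by
    calc k = (Finset.univ : Finset (Fin k)).card := by simp
      _ = (Finset.univ.image fun j : Fin k => f (Sum.inr j)).card :=
          (Finset.card_image_of_injective _ (fun a b hab => Sum.inr_injective (hinj hab))).symm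
      _ ≤ _ := Finset.card_le_card hsub
  have h5 := Finset.card_insert_le v (G.neighborFinset u)
  rw [SimpleGraph.card_neighborFinset_eq_degree] at h5
  omega

private lemma hub_img_ne_right {k : ℕ} (hk : 6 ≤ k) [DecidableRel G.Adj] {u v : Fin n}
    {f : wheel k →g (G ⊔ fromEdgeSet {s(u, v)})} (hinj : Function.Injective f)
    (hv : G.degree v ≤ k - 2) : f (Sum.inl ()) ≠ v := by
  intro hfv
  have hsub : (Finset.univ.image fun j : Fin k => f (Sum.inr j)) ⊆
      insert u (G.neighborFinset v) := by
    intro x hx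
    simp only [Finset.mem_image] at hx
    obtain ⟨j, _, rfl⟩ := hx
    have hadj : (wheel k).Adj (Sum.inl ()) (Sum.inr j) := trivial
    have h2 := f.map_adj hadj
    rw [hfv] at h2
    exact sup_adj_mem' h2
  have hk' : k ≤ (insert u (G.neighborFinset v)).card := by
    calc k = (Finset.univ : Finset (Fin k)).card := by simp
      _ = (Finset.univ.image fun j : Fin k => f (Sum.inr j)).card :=
          (Finset.card_image_of_injective _ (fun a b hab => Sum.inr_injective (hinj hab))).symm
      _ ≤ _ := Finset.card_le_card hsub
  have h5 := Finset.card_insert_le u (G.neighborFinset v)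
  rw [SimpleGraph.card_neighborFinset_eq_degree] at h5
  omega

/-- Degree-2 vertices are only adjacent to vertices of degree at least 3. -/
private lemma c_indep {k : ℕ} (hk : 6 ≤ k) (hn : 2 ≤ n) [DecidableRel G.Adj]
    (hG : IsSemiSat (wheel k) G) (hdeg : ∀ v : Fin n, G.degree v ≤ n - 2)
    {u v : Fin n} (hu : G.degree u = 2) (hv : G.degree v = 2) (huv : u ≠ v) :
    ¬ G.Adj u v := by
  classical
  intro hadj
  obtain ⟨y, hy, hnady⟩ := exists_nonadj_s15 hn (hdeg u)
  have hyv : y ≠ v := fun h => hnady (h ▸ hadj)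
  obtain ⟨f, hinj, a, b, hab, ha, hb⟩ := hG u y (Ne.symm hy) hnady
  have hule : G.degree u ≤ k - 2 := by omega
  match a, ha with
  | Sum.inl (), ha => exact hub_img_ne_left hk hinj hule ha
  | Sum.inr i, ha =>
    obtain ⟨m, hm⟩ : ∃ m, k = m + 6 := ⟨k - 6, by omega⟩
    subst hm
    -- the three images equal insert y (neighborFinset u)
    have hsub : ({f (Sum.inl ()), f (Sum.inr (i+1)), f (Sum.inr (i-1))} : Finset (Fin n)) ⊆
        insert y (G.neighborFinset u) := by
      intro x hx
      simp only [mem_insert, mem_singleton] at hx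
      have hadj1 : (wheel (m+6)).Adj (Sum.inr i) (Sum.inl ()) := trivial
      rcases hx with rfl | rfl | rfl
      · have h2 := f.map_adj hadj1; rw [ha] at h2; exact sup_adj_mem h2
      · have h2 := f.map_adj (wheel_cycle_adj_succ i); rw [ha] at h2; exact sup_adj_mem h2
      · have h2 := f.map_adj (wheel_cycle_adj_pred i); rw [ha] at h2; exact sup_adj_mem h2
    have hcard : (insert y (G.neighborFinset u)).card ≤ 3 := by
      have h5 := Finset.card_insert_le y (G.neighborFinset u)
      rw [SimpleGraph.card_neighborFinset_eq_degree] at h5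
      omega
    have heq : ({f (Sum.inl ()), f (Sum.inr (i+1)), f (Sum.inr (i-1))} : Finset (Fin n)) =
        insert y (G.neighborFinset u) := by
      apply Finset.eq_of_subset_of_card_le hsub
      rw [card_three_image hinj i]
      exact hcard
    have hvmem : v ∈ insert y (G.neighborFinset u) :=
      mem_insert_of_mem ((SimpleGraph.mem_neighborFinset ..).2 hadj)
    rw [← heq] at hvmem
    simp only [mem_insert, mem_singleton] at hvmem
    have hvu : v ≠ u := Ne.symm huv
    rcases hvmem with hfv | hfv | hfv
    · -- v is the hub image: degree ≥ k
      have h9 := hub_degree hinj (hfv ▸ hvu) (hfv ▸ hyv.symm)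
      rw [← hfv] at h9
      omega
    · have h9 := cycle_img_degree (by omega) hinj (hfv ▸ hvu) (hfv ▸ hyv.symm)
      rw [← hfv] at h9
      omega
    · have h9 := cycle_img_degree (by omega) hinj (hfv ▸ hvu) (hfv ▸ hyv.symm)
      rw [← hfv] at h9
      omega

end AuxNoGrand3
section AuxNoGrand4
open Finset
open Fin.CommRing

variable {n : ℕ} {G : SimpleGraph (Fin n)}

private lemma c_pair {k : ℕ} (hk : 6 ≤ k) (hn : 2 ≤ n) [DecidableRel G.Adj]
    (hG : IsSemiSat (wheel k) G) (hdeg : ∀ v : Fin n, G.degree v ≤ n - 2)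
    {u v : Fin n} (hu : G.degree u = 2) (hv : G.degree v = 2) (huv : u ≠ v) :
    ∃ h wu wv : Fin n, wu ≠ wv ∧ wu ≠ h ∧ wv ≠ h ∧
      G.neighborFinset u = {h, wu} ∧ G.neighborFinset v = {h, wv} := by
  classical
  have hnadj : ¬ G.Adj u v := c_indep hk hn hG hdeg hu hv huv
  obtain ⟨f, hinj, a, b, hab, ha, hb⟩ := hG u v huv hnadj
  have hule : G.degree u ≤ k - 2 := by omega
  have hvle : G.degree v ≤ k - 2 := by omega
  match a, ha, b, hb with
  | Sum.inl (), ha, _, _ => exact absurd ha (hub_img_ne_left hk hinj hule)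
  | Sum.inr i, ha, Sum.inl (), hb => exact absurd hb (hub_img_ne_right hk hinj hvle)
  | Sum.inr i, ha, Sum.inr j, hb =>
    obtain ⟨m, hm⟩ : ∃ m, k = m + 6 := ⟨k - 6, by omega⟩
    subst hm
    have hcadj : (cycleGraph (m+6)).Adj i j := hab
    have hd : i - j = 1 ∨ j - i = 1 := (cycleGraph_adj (n := m+4)).1 hcadj
    have hd2 : (i - j) = 1 ∨ -(i - j) = 1 := by
      rcases hd with h | h
      · exact Or.inl h
      · exact Or.inr (by rw [neg_sub]; exact h)
    have hd2' : (j - i) = 1 ∨ -(j - i) = 1 := by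
      rcases hd with h | h
      · exact Or.inr (by rw [neg_sub]; exact h)
      · exact Or.inl h
    set c : Fin (m+6) := i + (i - j) with hc_def
    set c' : Fin (m+6) := j + (j - i) with hc'_def
    have hAdj_ic : (cycleGraph (m+6)).Adj i c := by
      rw [cycleGraph_adj (n := m+4)]
      have h1 : c - i = i - j := by rw [hc_def]; ring
      have h2 : i - c = j - i := by rw [hc_def]; ring
      rcases hd with h | h
      · right; rw [h1]; exact h
      · left; rw [h2]; exact h
    have hAdj_jc' : (cycleGraph (m+6)).Adj j c' := by
      rw [cycleGraph_adj (n := m+4)]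
      have h1 : c' - j = j - i := by rw [hc'_def]; ring
      have h2 : j - c' = i - j := by rw [hc'_def]; ring
      rcases hd with h | h
      · left; rw [h2]; exact h
      · right; rw [h1]; exact h
    have hc_ne_j : c ≠ j := by
      intro h
      have h2 : ((2:ℕ) : Fin (m+6)) * (i - j) = 0 := by
        push_cast
        rw [hc_def] at h
        linear_combination h
      exact fin_mul_d_ne_zero hd2 (by omega) (by omega) h2
    have hc_ne_i : c ≠ i := by
      intro h
      have h2 : ((1:ℕ) : Fin (m+6)) * (i - j) = 0 := by
        push_cast
        rw [hc_def] at h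
        linear_combination h
      exact fin_mul_d_ne_zero hd2 (by omega) (by omega) h2
    have hc'_ne_i : c' ≠ i := by
      intro h
      have h2 : ((2:ℕ) : Fin (m+6)) * (j - i) = 0 := by
        push_cast
        rw [hc'_def] at h
        linear_combination h
      exact fin_mul_d_ne_zero hd2' (by omega) (by omega) h2
    have hc'_ne_j : c' ≠ j := by
      intro h
      have h2 : ((1:ℕ) : Fin (m+6)) * (j - i) = 0 := by
        push_cast
        rw [hc'_def] at h
        linear_combination h
      exact fin_mul_d_ne_zero hd2' (by omega) (by omega) h2
    have hcc' : c ≠ c' := by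
      intro h
      have h2 : ((3:ℕ) : Fin (m+6)) * (i - j) = 0 := by
        push_cast
        rw [hc_def, hc'_def] at h
        linear_combination h
      exact fin_mul_d_ne_zero hd2 (by omega) (by omega) h2
    have hfinl_ne_u : f (Sum.inl ()) ≠ u := hub_img_ne_left (by omega) hinj hule
    have hfinl_ne_v : f (Sum.inl ()) ≠ v := hub_img_ne_right (by omega) hinj hvle
    have hwu_ne_u : f (Sum.inr c) ≠ u := by
      intro h; exact hc_ne_i (by simpa using hinj (h.trans ha.symm))
    have hwu_ne_v : f (Sum.inr c) ≠ v := by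
      intro h; exact hc_ne_j (by simpa using hinj (h.trans hb.symm))
    have hwv_ne_u : f (Sum.inr c') ≠ u := by
      intro h; exact hc'_ne_i (by simpa using hinj (h.trans ha.symm))
    have hwv_ne_v : f (Sum.inr c') ≠ v := by
      intro h; exact hc'_ne_j (by simpa using hinj (h.trans hb.symm))
    -- neighbour set of u
    have hadj_u_inl : G.Adj u (f (Sum.inl ())) := by
      have hadjw : (wheel (m+6)).Adj (Sum.inr i) (Sum.inl ()) := trivial
      have h2 := f.map_adj hadjw
      rw [ha] at h2
      exact (adj_of_sup' h2.symm hfinl_ne_u hfinl_ne_v).symm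
    have hadj_u_c : G.Adj u (f (Sum.inr c)) := by
      have hadjw : (wheel (m+6)).Adj (Sum.inr i) (Sum.inr c) := hAdj_ic
      have h2 := f.map_adj hadjw
      rw [ha] at h2
      exact (adj_of_sup' h2.symm hwu_ne_u hwu_ne_v).symm
    have hadj_v_inl : G.Adj v (f (Sum.inl ())) := by
      have hadjw : (wheel (m+6)).Adj (Sum.inr j) (Sum.inl ()) := trivial
      have h2 := f.map_adj hadjw
      rw [hb] at h2
      exact (adj_of_sup' h2.symm hfinl_ne_u hfinl_ne_v).symm
    have hadj_v_c' : G.Adj v (f (Sum.inr c')) := by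
      have hadjw : (wheel (m+6)).Adj (Sum.inr j) (Sum.inr c') := hAdj_jc'
      have h2 := f.map_adj hadjw
      rw [hb] at h2
      exact (adj_of_sup' h2.symm hwv_ne_u hwv_ne_v).symm
    have hinlc : f (Sum.inl ()) ≠ f (Sum.inr c) := fun h => by simpa using hinj h
    have hinlc' : f (Sum.inl ()) ≠ f (Sum.inr c') := fun h => by simpa using hinj h
    have heq_u : G.neighborFinset u = {f (Sum.inl ()), f (Sum.inr c)} := by
      refine (Finset.eq_of_subset_of_card_le ?_ ?_).symm
      · intro x hx
        simp only [mem_insert, mem_singleton] at hx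
        rcases hx with rfl | rfl
        · exact (SimpleGraph.mem_neighborFinset ..).2 hadj_u_inl
        · exact (SimpleGraph.mem_neighborFinset ..).2 hadj_u_c
      · rw [SimpleGraph.card_neighborFinset_eq_degree, hu,
          card_insert_of_notMem (by simpa using hinlc), card_singleton]
    have heq_v : G.neighborFinset v = {f (Sum.inl ()), f (Sum.inr c')} := by
      refine (Finset.eq_of_subset_of_card_le ?_ ?_).symm
      · intro x hx
        simp only [mem_insert, mem_singleton] at hx
        rcases hx with rfl | rfl
        · exact (SimpleGraph.mem_neighborFinset ..).2 hadj_v_inl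
        · exact (SimpleGraph.mem_neighborFinset ..).2 hadj_v_c'
      · rw [SimpleGraph.card_neighborFinset_eq_degree, hv,
          card_insert_of_notMem (by simpa using hinlc'), card_singleton]
    exact ⟨f (Sum.inl ()), f (Sum.inr c), f (Sum.inr c'),
      fun h => hcc' (by simpa using hinj h), hinlc.symm, hinlc'.symm, heq_u, heq_v⟩

end AuxNoGrand4
section AuxNoGrand5
open Finset
open Fin.CommRing

variable {n : ℕ} {G : SimpleGraph (Fin n)}

private lemma c_nbhd_ne {k : ℕ} (hk : 6 ≤ k) (hn : 2 ≤ n) [DecidableRel G.Adj]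
    (hG : IsSemiSat (wheel k) G) (hdeg : ∀ v : Fin n, G.degree v ≤ n - 2)
    {u v : Fin n} (hu : G.degree u = 2) (hv : G.degree v = 2) (huv : u ≠ v) :
    G.neighborFinset u ≠ G.neighborFinset v := by
  obtain ⟨h, wu, wv, hww, hwuh, hwvh, hNu, hNv⟩ := c_pair hk hn hG hdeg hu hv huv
  rw [hNu, hNv]
  intro heq
  have hmem : wu ∈ ({h, wv} : Finset (Fin n)) := by
    rw [← heq]; simp
  simp only [mem_insert, mem_singleton] at hmem
  rcases hmem with h1 | h1
  · exact hwuh h1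
  · exact hww h1

private lemma two_rep {u x : Fin n} [DecidableRel G.Adj] (hu : G.degree u = 2)
    (hx : x ∈ G.neighborFinset u) :
    ∃ w, w ≠ x ∧ G.neighborFinset u = {x, w} := by
  have hcard : (G.neighborFinset u).card = 2 := by
    rw [SimpleGraph.card_neighborFinset_eq_degree]; exact hu
  obtain ⟨a, b, hab, habs⟩ := Finset.card_eq_two.1 hcard
  rw [habs] at hx
  simp only [mem_insert, mem_singleton] at hx
  rcases hx with rfl | rfl
  · exact ⟨b, fun hbx => hab hbx.symm, habs⟩
  · exact ⟨a, hab, by rw [habs, Finset.pair_comm]⟩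

private lemma card_C_le {k : ℕ} (hk : 6 ≤ k) (hn : 2 ≤ n) [DecidableRel G.Adj]
    (hG : IsSemiSat (wheel k) G) (hdeg : ∀ v : Fin n, G.degree v ≤ n - 2)
    (hwit : ∀ x : Fin n, ∃ z : Fin n, G.degree z ≤ k - 2 ∧ ¬ G.Adj z x) :
    (Finset.univ.filter fun v : Fin n => G.degree v = 2).card ≤ 2 * k - 4 := by
  classical
  set Cs := Finset.univ.filter fun v : Fin n => G.degree v = 2 with hCs
  have hdeg2 : ∀ u ∈ Cs, G.degree u = 2 := by
    intro u hu; rw [hCs] at hu; simpa using hu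
  by_cases h3 : Cs.card ≤ 3
  · omega
  -- at least 4 elements
  have h4 : 4 ≤ Cs.card := by omega
  obtain ⟨u₀, hu₀, u₁, hu₁, hne01⟩ := Finset.one_lt_card.1 (by omega : 1 < Cs.card)
  obtain ⟨x, w0, w1, hw01, hw0x, hw1x, hN0, hN1⟩ :=
    c_pair hk hn hG hdeg (hdeg2 u₀ hu₀) (hdeg2 u₁ hu₁) hne01
  -- x is adjacent to every vertex of Cs
  have hstar : ∀ u ∈ Cs, x ∈ G.neighborFinset u := by
    intro u hu
    by_cases h0 : u = u₀
    · subst h0; rw [hN0]; simp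
    by_cases h1 : u = u₁
    · subst h1; rw [hN1]; simp
    by_contra hxu
    -- then w0, w1 ∈ N(u), so N(u) = {w0, w1}
    have hkey : ∀ v ∈ Cs, x ∉ G.neighborFinset v → v ≠ u₀ → v ≠ u₁ →
        G.neighborFinset v = {w0, w1} := by
      intro v hv hxv hv0 hv1
      have hw0mem : w0 ∈ G.neighborFinset v := by
        obtain ⟨g, a, b, _, _, _, hNa, hNb⟩ :=
          c_pair hk hn hG hdeg (hdeg2 u₀ hu₀) (hdeg2 v hv) (Ne.symm hv0)
        have hg_mem : g ∈ G.neighborFinset u₀ := by rw [hNa]; simp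
        have hg_memv : g ∈ G.neighborFinset v := by rw [hNb]; simp
        rw [hN0] at hg_mem
        simp only [mem_insert, mem_singleton] at hg_mem
        rcases hg_mem with rfl | rfl
        · exact absurd hg_memv hxv
        · exact hg_memv
      have hw1mem : w1 ∈ G.neighborFinset v := by
        obtain ⟨g, a, b, _, _, _, hNa, hNb⟩ :=
          c_pair hk hn hG hdeg (hdeg2 u₁ hu₁) (hdeg2 v hv) (Ne.symm hv1)
        have hg_mem : g ∈ G.neighborFinset u₁ := by rw [hNa]; simp
        have hg_memv : g ∈ G.neighborFinset v := by rw [hNb]; simp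
        rw [hN1] at hg_mem
        simp only [mem_insert, mem_singleton] at hg_mem
        rcases hg_mem with rfl | rfl
        · exact absurd hg_memv hxv
        · exact hg_memv
      have hsub : ({w0, w1} : Finset (Fin n)) ⊆ G.neighborFinset v := by
        intro t ht
        simp only [mem_insert, mem_singleton] at ht
        rcases ht with rfl | rfl
        · exact hw0mem
        · exact hw1mem
      refine (Finset.eq_of_subset_of_card_le hsub ?_).symm
      rw [SimpleGraph.card_neighborFinset_eq_degree, hdeg2 v hv,
        card_insert_of_notMem (by simpa using hw01), card_singleton]
    have hNu : G.neighborFinset u = {w0, w1} := hkey u hu hxu h0 h1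
    -- now pick a fourth element
    have hexists : ∃ u₃ ∈ Cs, u₃ ≠ u₀ ∧ u₃ ≠ u₁ ∧ u₃ ≠ u := by
      by_contra hc
      push_neg at hc
      have hsub : Cs ⊆ {u₀, u₁, u} := by
        intro t ht
        simp only [mem_insert, mem_singleton]
        by_cases e0 : t = u₀
        · exact Or.inl e0
        by_cases e1 : t = u₁
        · exact Or.inr (Or.inl e1)
        · exact Or.inr (Or.inr (hc t ht e0 e1))
      have := Finset.card_le_card hsub
      have h9 : ({u₀, u₁, u} : Finset (Fin n)).card ≤ 3 := by
        apply le_trans (Finset.card_insert_le _ _)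
        have := Finset.card_insert_le u₁ ({u} : Finset (Fin n))
        simp at this ⊢
        omega
      omega
    obtain ⟨u₃, hu₃, h30, h31, h3u⟩ := hexists
    by_cases hx3 : x ∈ G.neighborFinset u₃
    · -- N(u₃) = {x, r} with r ∈ {w0, w1}
      obtain ⟨r, hrx, hN3⟩ := two_rep (hdeg2 u₃ hu₃) hx3
      obtain ⟨g, a, b, _, _, _, hNa, hNb⟩ :=
        c_pair hk hn hG hdeg (hdeg2 u₃ hu₃) (hdeg2 u hu) h3u
      have hg3 : g ∈ G.neighborFinset u₃ := by rw [hNa]; simp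
      have hgu : g ∈ G.neighborFinset u := by rw [hNb]; simp
      rw [hN3] at hg3
      rw [hNu] at hgu
      simp only [mem_insert, mem_singleton] at hg3 hgu
      have hgr : g = r := by
        rcases hg3 with rfl | rfl
        · exfalso
          rcases hgu with h' | h'
          · exact hw0x (by rw [h'])
          · exact hw1x (by rw [h'])
        · rfl
      subst hgr
      rcases hgu with rfl | rfl
      · exact c_nbhd_ne hk hn hG hdeg (hdeg2 u₃ hu₃) (hdeg2 u₀ hu₀) h30 (by rw [hN3, hN0])
      · exact c_nbhd_ne hk hn hG hdeg (hdeg2 u₃ hu₃) (hdeg2 u₁ hu₁) h31 (by rw [hN3, hN1])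
    · have hN3 : G.neighborFinset u₃ = {w0, w1} := hkey u₃ hu₃ hx3 h30 h31
      exact c_nbhd_ne hk hn hG hdeg (hdeg2 u₃ hu₃) (hdeg2 u hu) h3u (by rw [hN3, hNu])
  -- use the witness z missing x
  obtain ⟨z, hzdeg, hzx⟩ := hwit x
  have hzC : z ∉ Cs := by
    intro hz
    exact hzx ((SimpleGraph.mem_neighborFinset ..).1 (hstar z hz))
  -- representation function
  have hrep : ∀ u : Fin n, ∃ w, u ∈ Cs → (w ≠ x ∧ G.neighborFinset u = {x, w}) := by
    intro u
    by_cases hu : u ∈ Cs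
    · obtain ⟨w, hw1, hw2⟩ := two_rep (hdeg2 u hu) (hstar u hu)
      exact ⟨w, fun _ => ⟨hw1, hw2⟩⟩
    · exact ⟨x, fun h => absurd h hu⟩
  choose wf hwf using hrep
  -- split Cs
  have hsplit : (Cs.filter fun u => G.Adj z u).card + (Cs.filter fun u => ¬ G.Adj z u).card
      = Cs.card := by
    exact Finset.card_filter_add_card_filter_not (fun u => G.Adj z u)
  have hc1 : (Cs.filter fun u => G.Adj z u).card ≤ k - 2 := by
    have hsub : (Cs.filter fun u => G.Adj z u) ⊆ G.neighborFinset z := by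
      intro t ht
      rw [mem_filter] at ht
      exact (SimpleGraph.mem_neighborFinset ..).2 ht.2
    have := Finset.card_le_card hsub
    rw [SimpleGraph.card_neighborFinset_eq_degree] at this
    omega
  have hc2 : (Cs.filter fun u => ¬ G.Adj z u).card ≤ k - 2 := by
    have hinj : ∀ t ∈ (Cs.filter fun u => ¬ G.Adj z u), wf t ∈ G.neighborFinset z := by
      intro t ht
      rw [mem_filter] at ht
      obtain ⟨htC, htadj⟩ := ht
      obtain ⟨hwx, hNt⟩ := hwf t htC
      have htz : t ≠ z := fun h => hzC (h ▸ htC)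
      obtain ⟨h', hh1, hh2, hh3⟩ := hub_exists hk hG hzdeg
        (by rw [hdeg2 t htC]; omega) (Ne.symm htz) htadj
      -- h' ∈ N(t) = {x, wf t}
      have hmem : h' ∈ G.neighborFinset t := (SimpleGraph.mem_neighborFinset ..).2 hh2.symm
      rw [hNt] at hmem
      simp only [mem_insert, mem_singleton] at hmem
      rcases hmem with rfl | rfl
      · exact absurd hh1.symm hzx
      · exact (SimpleGraph.mem_neighborFinset ..).2 hh1.symm
    have hinj2 : Set.InjOn wf (Cs.filter fun u => ¬ G.Adj z u) := by
      intro s hs t ht hst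
      simp only [coe_filter, Set.mem_setOf_eq] at hs ht
      by_contra hne
      have hNs := (hwf s hs.1).2
      have hNt := (hwf t ht.1).2
      exact c_nbhd_ne hk hn hG hdeg (hdeg2 s hs.1) (hdeg2 t ht.1) hne
        (by rw [hNs, hNt, hst])
    have := Finset.card_le_card_of_injOn wf hinj hinj2
    rw [SimpleGraph.card_neighborFinset_eq_degree] at this
    omega
  omega

end AuxNoGrand5
set_option maxHeartbeats 1000000 in
open Finset in
/-- Proposition 3.5: if no vertex is adjacent to every vertex of `A*_G`, then
`2e(G) ≥ 5n - 6(k - 1)²`. -/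
theorem no_grand_connector_bound (k n : ℕ) (hk : 6 ≤ k) (hn : (k - 1) ^ 2 + 1 ≤ n)
    (G : SimpleGraph (Fin n)) (hG : IsSemiSat (wheel k) G)
    (hdeg : ∀ v : Fin n, degS G v ≤ n - 2)
    (hA : k ≤ (setAstar k G).ncard)
    (hcap : (⋂ v ∈ setAstar k G, G.neighborSet v) = ∅) :
    5 * (n : ℤ) - 6 * ((k : ℤ) - 1) ^ 2 ≤ 2 * (G.edgeSet.ncard : ℤ) := by
  classical
  letI : DecidableRel G.Adj := Classical.decRel _
  have hn2 : 2 ≤ n := by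
    have h5 : 5 * 5 ≤ (k - 1) * (k - 1) := Nat.mul_le_mul (by omega) (by omega)
    rw [pow_two] at hn
    omega
  have hdegS : ∀ v, degS G v = G.degree v := fun v => by
    rw [degS, ← SimpleGraph.card_neighborFinset_eq_degree, SimpleGraph.neighborFinset_def,
      Set.ncard_eq_toFinset_card']
  have hdeg' : ∀ v, G.degree v ≤ n - 2 := fun v => by rw [← hdegS]; exact hdeg v
  have hAstar_iff : ∀ v : Fin n, v ∈ setAstar k G ↔ (2 ≤ G.degree v ∧ G.degree v ≤ k - 2) := by
    intro v
    simp only [setAstar, setB, setC, Set.mem_union, Set.mem_setOf_eq, hdegS]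
    omega
  -- witnesses from hcap
  have hwit' : ∀ x : Fin n, ∃ z : Fin n, G.degree z ≤ k - 2 ∧ ¬ G.Adj z x := by
    intro x
    have hx : x ∉ ⋂ v ∈ setAstar k G, G.neighborSet v := by
      rw [hcap]; exact Set.notMem_empty x
    simp only [Set.mem_iInter, SimpleGraph.mem_neighborSet] at hx
    push_neg at hx
    obtain ⟨z, hz, hnadj⟩ := hx
    exact ⟨z, ((hAstar_iff z).1 hz).2, hnadj⟩
  -- a fixed vertex of A*
  have hne : (setAstar k G).Nonempty := by
    rcases Set.eq_empty_or_nonempty (setAstar k G) with h | h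
    · rw [h, Set.ncard_empty] at hA; omega
    · exact h
  obtain ⟨z₁, hz₁⟩ := hne
  have hz₁d : G.degree z₁ ≤ k - 2 := ((hAstar_iff z₁).1 hz₁).2
  have hmin : ∀ v : Fin n, 2 ≤ G.degree v := min_degree hk hn2 hG hdeg'
  -- the finsets
  set D : Finset (Fin n) := Finset.univ.filter (fun v : Fin n => G.degree v ≤ 4) with hD
  set Cs : Finset (Fin n) := Finset.univ.filter (fun v : Fin n => G.degree v = 2) with hCs
  have hCcard : Cs.card ≤ 2 * k - 4 := card_C_le hk hn2 hG hdeg' hwit'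
  have hDdeg : ∀ u ∈ D, G.degree u ≤ 4 := fun u hu => by
    rw [hD] at hu; simpa using hu
  have hDk2 : ∀ u ∈ D, G.degree u ≤ k - 2 := fun u hu => by
    have := hDdeg u hu; omega
  -- choice of first hubs
  have hh1 : ∀ u : Fin n, ∃ h : Fin n,
      (u ∈ D ∧ u ≠ z₁ ∧ ¬ G.Adj z₁ u) → (G.Adj h z₁ ∧ G.Adj h u ∧ k ≤ G.degree h) := by
    intro u
    by_cases hc : u ∈ D ∧ u ≠ z₁ ∧ ¬ G.Adj z₁ u
    · obtain ⟨huD, huz, hna⟩ := hc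
      obtain ⟨h, hh⟩ := hub_exists hk hG hz₁d (hDk2 u huD) (Ne.symm huz) hna
      exact ⟨h, fun _ => hh⟩
    · exact ⟨z₁, fun h => absurd h hc⟩
  choose h1f hh1f using hh1
  -- witnesses per hub
  choose zw hzw1 hzw2 using hwit'
  -- second hubs
  have hh2 : ∀ u : Fin n, ∃ h : Fin n,
      (u ∈ D ∧ u ≠ zw (h1f u) ∧ ¬ G.Adj (zw (h1f u)) u) →
        (G.Adj h (zw (h1f u)) ∧ G.Adj h u ∧ k ≤ G.degree h ∧ h ≠ h1f u) := by
    intro u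
    by_cases hc : u ∈ D ∧ u ≠ zw (h1f u) ∧ ¬ G.Adj (zw (h1f u)) u
    · obtain ⟨huD, hune, hna⟩ := hc
      obtain ⟨h, hh_z, hh_u, hh_deg⟩ :=
        hub_exists hk hG (hzw1 (h1f u)) (hDk2 u huD) (Ne.symm hune) hna
      refine ⟨h, fun _ => ⟨hh_z, hh_u, hh_deg, fun heq => ?_⟩⟩
      exact hzw2 (h1f u) (heq ▸ hh_z).symm
    · exact ⟨z₁, fun h => absurd h hc⟩
  choose h2f hh2f using hh2
  -- pools
  set P1 : Finset (Fin n) := (G.neighborFinset z₁).filter (fun x => k ≤ G.degree x) with hP1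
  set Q : Finset (Fin n) :=
    P1 ∪ P1.biUnion (fun x => (G.neighborFinset (zw x)).filter (fun y => k ≤ G.degree y)) with hQ
  set D' : Finset (Fin n) := D.filter (fun u => u ≠ z₁ ∧ ¬ G.Adj z₁ u) with hD'
  set D'' : Finset (Fin n) :=
    D'.filter (fun u => u ≠ zw (h1f u) ∧ ¬ G.Adj (zw (h1f u)) u) with hD''
  have hD'sub : D' ⊆ D := Finset.filter_subset _ _
  have hD''sub : D'' ⊆ D' := Finset.filter_subset _ _
  have hD'spec : ∀ u ∈ D', u ∈ D ∧ u ≠ z₁ ∧ ¬ G.Adj z₁ u := by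
    intro u hu; rw [hD', Finset.mem_filter] at hu; exact ⟨hu.1, hu.2⟩
  have hD''spec : ∀ u ∈ D'', u ∈ D ∧ u ≠ zw (h1f u) ∧ ¬ G.Adj (zw (h1f u)) u := by
    intro u hu
    rw [hD'', Finset.mem_filter] at hu
    exact ⟨hD'sub hu.1, hu.2⟩
  have hmemP1 : ∀ u ∈ D', h1f u ∈ P1 := by
    intro u hu
    obtain ⟨hadjz, hadju, hdegh⟩ := hh1f u (hD'spec u hu)
    rw [hP1, Finset.mem_filter, SimpleGraph.mem_neighborFinset]
    exact ⟨hadjz.symm, hdegh⟩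
  have hmemQ1 : ∀ u ∈ D', h1f u ∈ Q := by
    intro u hu
    rw [hQ]
    exact Finset.mem_union_left _ (hmemP1 u hu)
  have hmemQ2 : ∀ u ∈ D'', h2f u ∈ Q := by
    intro u hu
    obtain ⟨hadjz, hadju, hdegh, hne12⟩ := hh2f u (hD''spec u hu)
    rw [hQ]
    apply Finset.mem_union_right
    rw [Finset.mem_biUnion]
    refine ⟨h1f u, hmemP1 u (hD''sub hu), ?_⟩
    rw [Finset.mem_filter, SimpleGraph.mem_neighborFinset]
    exact ⟨hadjz.symm, hdegh⟩
  have hQk : ∀ x ∈ Q, k ≤ G.degree x := by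
    intro x hx
    rw [hQ, Finset.mem_union] at hx
    rcases hx with hx | hx
    · rw [hP1, Finset.mem_filter] at hx; exact hx.2
    · rw [Finset.mem_biUnion] at hx
      obtain ⟨y, _, hx⟩ := hx
      rw [Finset.mem_filter] at hx
      exact hx.2
  -- cardinality bounds
  have hP1card : P1.card ≤ k - 2 := by
    have h1 : P1 ⊆ G.neighborFinset z₁ := Finset.filter_subset _ _
    have h2 := Finset.card_le_card h1
    rw [SimpleGraph.card_neighborFinset_eq_degree] at h2
    omega
  have hQcard : Q.card ≤ (k - 2) + (k - 2) * (k - 2) := by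
    have h1 : Q.card ≤ P1.card +
        (P1.biUnion (fun x => (G.neighborFinset (zw x)).filter (fun y => k ≤ G.degree y))).card := by
      rw [hQ]; exact Finset.card_union_le _ _
    have h2 : (P1.biUnion (fun x => (G.neighborFinset (zw x)).filter
        (fun y => k ≤ G.degree y))).card ≤ ∑ x ∈ P1, ((G.neighborFinset (zw x)).filter
        (fun y => k ≤ G.degree y)).card := Finset.card_biUnion_le
    have h3 : ∑ x ∈ P1, ((G.neighborFinset (zw x)).filter (fun y => k ≤ G.degree y)).card
        ≤ P1.card * (k - 2) := by
      apply Finset.sum_le_card_nsmul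
      intro x _
      have h4 : ((G.neighborFinset (zw x)).filter (fun y => k ≤ G.degree y)).card
          ≤ (G.neighborFinset (zw x)).card := Finset.card_le_card (Finset.filter_subset _ _)
      rw [SimpleGraph.card_neighborFinset_eq_degree] at h4
      have := hzw1 x
      omega
    have h5 : P1.card * (k - 2) ≤ (k - 2) * (k - 2) :=
      Nat.mul_le_mul_right _ hP1card
    omega
  have hD'card : D.card ≤ D'.card + (k - 1) := by
    have hsplit : D'.card + (D.filter (fun u => ¬(u ≠ z₁ ∧ ¬ G.Adj z₁ u))).card = D.card := by
      rw [hD']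
      exact Finset.card_filter_add_card_filter_not _
    have hsub : D.filter (fun u => ¬(u ≠ z₁ ∧ ¬ G.Adj z₁ u)) ⊆
        insert z₁ (G.neighborFinset z₁) := by
      intro u hu
      rw [Finset.mem_filter] at hu
      have hu2 := hu.2
      push_neg at hu2
      by_cases h : u = z₁
      · exact Finset.mem_insert.2 (Or.inl h)
      · exact Finset.mem_insert_of_mem
          ((SimpleGraph.mem_neighborFinset ..).2 (hu2 h))
    have h2 := Finset.card_le_card hsub
    have h3 := Finset.card_insert_le z₁ (G.neighborFinset z₁)
    rw [SimpleGraph.card_neighborFinset_eq_degree] at h3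
    omega
  have hD''card : D'.card ≤ D''.card + (k - 2) * (k - 1) := by
    have hsplit : D''.card +
        (D'.filter (fun u => ¬(u ≠ zw (h1f u) ∧ ¬ G.Adj (zw (h1f u)) u))).card = D'.card := by
      rw [hD'']
      exact Finset.card_filter_add_card_filter_not _
    have hsub : D'.filter (fun u => ¬(u ≠ zw (h1f u) ∧ ¬ G.Adj (zw (h1f u)) u)) ⊆
        P1.biUnion (fun x => insert (zw x) (G.neighborFinset (zw x))) := by
      intro u hu
      rw [Finset.mem_filter] at hu
      have hu2 := hu.2
      push_neg at hu2
      rw [Finset.mem_biUnion]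
      refine ⟨h1f u, hmemP1 u hu.1, ?_⟩
      by_cases h : u = zw (h1f u)
      · exact Finset.mem_insert.2 (Or.inl h)
      · exact Finset.mem_insert_of_mem
          ((SimpleGraph.mem_neighborFinset ..).2 (hu2 h))
    have h2 := Finset.card_le_card hsub
    have h3 : (P1.biUnion (fun x => insert (zw x) (G.neighborFinset (zw x)))).card
        ≤ P1.card * (k - 1) := by
      apply le_trans Finset.card_biUnion_le
      apply Finset.sum_le_card_nsmul
      intro x _
      have h4 := Finset.card_insert_le (zw x) (G.neighborFinset (zw x))
      rw [SimpleGraph.card_neighborFinset_eq_degree] at h4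
      have := hzw1 x
      omega
    have h5 : P1.card * (k - 1) ≤ (k - 2) * (k - 1) :=
      Nat.mul_le_mul_right _ hP1card
    omega
  -- the incidence bound
  set W : Finset (Fin n × Fin n) :=
    (D'.image (fun u => (h1f u, u))) ∪ (D''.image (fun u => (h2f u, u))) with hW
  have hWcard : D'.card + D''.card = W.card := by
    rw [hW]
    rw [Finset.card_union_of_disjoint]
    · rw [Finset.card_image_of_injective _ (fun a b h => congrArg Prod.snd h),
        Finset.card_image_of_injective _ (fun a b h => congrArg Prod.snd h)]
    · rw [Finset.disjoint_left]
      rintro ⟨x, u⟩ h1 h2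
      rw [Finset.mem_image] at h1 h2
      obtain ⟨a, haD, ha⟩ := h1
      obtain ⟨b, hbD, hb⟩ := h2
      have hau : a = u := congrArg Prod.snd ha
      have hbu : b = u := congrArg Prod.snd hb
      subst hau
      rw [hbu] at hb hbD
      have hx1 : h1f a = x := congrArg Prod.fst ha
      have hx2 : h2f a = x := congrArg Prod.fst hb
      exact (hh2f a (hD''spec a hbD)).2.2.2 (hx2.trans hx1.symm)
  have hWsub : W ⊆ Q.biUnion (fun x => (G.neighborFinset x).image (fun y => (x, y))) := by
    intro w hw
    rw [hW, Finset.mem_union] at hw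
    rw [Finset.mem_biUnion]
    rcases hw with hw | hw
    · rw [Finset.mem_image] at hw
      obtain ⟨u, huD, rfl⟩ := hw
      refine ⟨h1f u, hmemQ1 u huD, ?_⟩
      rw [Finset.mem_image]
      exact ⟨u, (SimpleGraph.mem_neighborFinset ..).2 (hh1f u (hD'spec u huD)).2.1, rfl⟩
    · rw [Finset.mem_image] at hw
      obtain ⟨u, huD, rfl⟩ := hw
      refine ⟨h2f u, hmemQ2 u huD, ?_⟩
      rw [Finset.mem_image]
      exact ⟨u, (SimpleGraph.mem_neighborFinset ..).2 (hh2f u (hD''spec u huD)).2.1, rfl⟩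
  have hWQ : W.card ≤ ∑ x ∈ Q, G.degree x := by
    calc W.card ≤ (Q.biUnion (fun x => (G.neighborFinset x).image (fun y => (x, y)))).card :=
          Finset.card_le_card hWsub
      _ ≤ ∑ x ∈ Q, ((G.neighborFinset x).image (fun y => (x, y))).card :=
          Finset.card_biUnion_le
      _ ≤ ∑ x ∈ Q, G.degree x := by
          apply Finset.sum_le_sum
          intro x _
          calc ((G.neighborFinset x).image (fun y => (x, y))).card
              ≤ (G.neighborFinset x).card := Finset.card_image_le
            _ = G.degree x := SimpleGraph.card_neighborFinset_eq_degree _ _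
  -- now the integer arithmetic
  have hdegsum : (∑ v : Fin n, (G.degree v : ℤ)) = 2 * (G.edgeFinset.card : ℤ) := by
    exact_mod_cast congrArg (Nat.cast : ℕ → ℤ) G.sum_degrees_eq_twice_card_edges
  have hEcard : (G.edgeSet.ncard : ℤ) = (G.edgeFinset.card : ℤ) := by
    norm_cast
    rw [SimpleGraph.edgeFinset]
    exact Set.ncard_eq_toFinset_card' _
  -- demand
  have hdemand : (∑ v ∈ D, ((5 : ℤ) - G.degree v)) ≤ 2 * D.card + Cs.card := by
    have hstep : ∀ v ∈ D, ((5 : ℤ) - G.degree v) ≤ 2 + (if G.degree v = 2 then (1:ℤ) else 0) := by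
      intro v hv
      have h4 := hDdeg v hv
      have h2 := hmin v
      by_cases h : G.degree v = 2
      · rw [if_pos h, h]; norm_num
      · rw [if_neg h]
        have h3 : 3 ≤ G.degree v := by omega
        have : (3 : ℤ) ≤ G.degree v := by exact_mod_cast h3
        linarith
    calc (∑ v ∈ D, ((5 : ℤ) - G.degree v))
        ≤ ∑ v ∈ D, ((2:ℤ) + (if G.degree v = 2 then (1:ℤ) else 0)) := Finset.sum_le_sum hstep
      _ = 2 * D.card + Cs.card := by
          rw [Finset.sum_add_distrib, Finset.sum_const, nsmul_eq_mul, Finset.sum_boole]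
          have hfil : D.filter (fun v => G.degree v = 2) = Cs := by
            rw [hD, hCs, Finset.filter_filter]
            apply Finset.filter_congr
            intro v _
            constructor
            · intro h; exact h.2
            · intro h; exact ⟨by omega, h⟩
          rw [hfil]
          push_cast
          ring
  -- supply
  have hsupply1 : (D'.card : ℤ) + D''.card - 5 * Q.card ≤ ∑ x ∈ Q, ((G.degree x : ℤ) - 5) := by
    rw [Finset.sum_sub_distrib, Finset.sum_const, nsmul_eq_mul]
    have hWZ : (D'.card : ℤ) + D''.card ≤ ∑ x ∈ Q, (G.degree x : ℤ) := by
      have h1 : ((D'.card + D''.card : ℕ) : ℤ) ≤ ((∑ x ∈ Q, G.degree x : ℕ) : ℤ) :=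
        (Nat.cast_le (α := ℤ)).2 (hWcard ▸ hWQ)
      push_cast at h1
      linarith
    push_cast
    linarith
  have hsupply2 : (∑ x ∈ Q, ((G.degree x : ℤ) - 5)) ≤
      ∑ v ∈ Finset.univ.filter (fun v : Fin n => ¬ G.degree v ≤ 4), ((G.degree v : ℤ) - 5) := by
    apply Finset.sum_le_sum_of_subset_of_nonneg
    · intro x hx
      rw [Finset.mem_filter]
      refine ⟨Finset.mem_univ _, ?_⟩
      have := hQk x hx
      omega
    · intro v hv _
      rw [Finset.mem_filter] at hv
      have h5 : 5 ≤ G.degree v := by omega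
      have : (5:ℤ) ≤ G.degree v := by exact_mod_cast h5
      linarith
  -- split the total sum
  have hsplit_univ : (∑ v : Fin n, ((5:ℤ) - G.degree v)) =
      (∑ v ∈ D, ((5:ℤ) - G.degree v)) +
      (∑ v ∈ Finset.univ.filter (fun v : Fin n => ¬ G.degree v ≤ 4), ((5:ℤ) - G.degree v)) := by
    rw [hD]
    exact (Finset.sum_filter_add_sum_filter_not Finset.univ _ _).symm
  have hsum_tot : (∑ v : Fin n, ((5:ℤ) - G.degree v)) = 5 * n - 2 * (G.edgeFinset.card : ℤ) := by
    rw [Finset.sum_sub_distrib, Finset.sum_const, Finset.card_univ, Fintype.card_fin, nsmul_eq_mul, hdegsum]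
    push_cast
    ring
  have hnegsum : (∑ v ∈ Finset.univ.filter (fun v : Fin n => ¬ G.degree v ≤ 4),
      ((5:ℤ) - G.degree v)) =
      - ∑ v ∈ Finset.univ.filter (fun v : Fin n => ¬ G.degree v ≤ 4), ((G.degree v : ℤ) - 5) := by
    rw [← Finset.sum_neg_distrib]
    apply Finset.sum_congr rfl
    intro v _
    ring
  -- cast bounds
  have zc1 : ((k - 2 : ℕ) : ℤ) = (k:ℤ) - 2 := by omega
  have zc2 : ((k - 1 : ℕ) : ℤ) = (k:ℤ) - 1 := by omega
  have zQ : (Q.card : ℤ) ≤ ((k:ℤ) - 2) + ((k:ℤ) - 2) * ((k:ℤ) - 2) := by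
    have h1 : ((Q.card : ℕ) : ℤ) ≤ (((k - 2) + (k - 2) * (k - 2) : ℕ) : ℤ) := (Nat.cast_le (α := ℤ)).2 hQcard
    rw [Nat.cast_add, Nat.cast_mul, zc1] at h1
    exact h1
  have zD' : ((D.card : ℤ)) ≤ (D'.card : ℤ) + ((k:ℤ) - 1) := by
    have h1 := (Nat.cast_le (α := ℤ)).2 hD'card
    rw [Nat.cast_add, zc2] at h1
    exact h1
  have zD'' : ((D'.card : ℤ)) ≤ (D''.card : ℤ) + ((k:ℤ) - 2) * ((k:ℤ) - 1) := by
    have h1 := (Nat.cast_le (α := ℤ)).2 hD''card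
    rw [Nat.cast_add, Nat.cast_mul, zc1, zc2] at h1
    exact h1
  have zCs : (Cs.card : ℤ) ≤ 2 * (k:ℤ) - 4 := by
    have h1 := (Nat.cast_le (α := ℤ)).2 hCcard
    omega
  have hkz : (6:ℤ) ≤ (k:ℤ) := by exact_mod_cast hk
  -- put everything together
  have hmain : 5 * (n : ℤ) - 2 * (G.edgeFinset.card : ℤ) ≤
      (Cs.card : ℤ) + 2 * ((k:ℤ) - 1) + 6 * ((k:ℤ) - 1) * ((k:ℤ) - 2) := by
    have e1 : 5 * (n : ℤ) - 2 * (G.edgeFinset.card : ℤ) =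
        (∑ v ∈ D, ((5:ℤ) - G.degree v)) +
        (∑ v ∈ Finset.univ.filter (fun v : Fin n => ¬ G.degree v ≤ 4), ((5:ℤ) - G.degree v)) := by
      rw [← hsplit_univ, hsum_tot]
    rw [e1, hnegsum]
    have h2 : (∑ v ∈ Finset.univ.filter (fun v : Fin n => ¬ G.degree v ≤ 4),
        ((G.degree v : ℤ) - 5)) ≥ (D'.card : ℤ) + D''.card - 5 * Q.card :=
      le_trans hsupply1 hsupply2
    nlinarith [hdemand, h2, zQ, zD', zD'', zCs, hkz]
  rw [hEcard]
  have hfinal : (Cs.card : ℤ) + 2 * ((k:ℤ) - 1) + 6 * ((k:ℤ) - 1) * ((k:ℤ) - 2) ≤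
      6 * ((k:ℤ) - 1) ^ 2 := by
    have hring : 6 * ((k:ℤ) - 1) ^ 2 = 6 * ((k:ℤ) - 1) * ((k:ℤ) - 2) + 6 * ((k:ℤ) - 1) := by
      ring
    rw [hring]
    linarith
  linarith
end
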